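/- arXiv:2604.21619 — 2 statements merged into one kernel-verified Lean document; each statement's English description precedes it below -/
import Mathlib

section
/- With ℓ = ⌊n/2⌋ and ε = 1 if n is even, ε = 0 if n is odd, the following multiplication rules hold in the group algebra F[W] of the type I₂(n) Coxeter group W: x₁·x₁ = (1+ε)·x₁ + (ℓ−ε)·x₃; x₁·x₂ = (1−ε)·x₂ + ℓ·x₃; x₂·x₁ = (1−ε)·x₁ + ℓ·x₃; x₂·x₂ = (1+ε)·x₂ + (ℓ−ε)·x₃; x₁·x₃ = x₃·x₁ = x₂·x₃ = x₃·x₂ = n·x₃; and x₃·x₃ = 2n·x₃, where all integer coefficients are interpreted via the canonical map ℕ → F. -/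
open Classical in
/-- The element `x_J = ∑_{w ∈ X_J} w` of the group algebra, where
`X_J = {w : ℓ(w sᵢ) > ℓ(w) for all i ∈ J}`. -/
noncomputable def descentElt (F : Type*) [Field F] {B W : Type*} [Group W] [Fintype W]
    {M : CoxeterMatrix B} (cs : CoxeterSystem M W) (J : Set B) : MonoidAlgebra F W :=
  ∑ w : W, if ∀ i ∈ J, cs.length w < cs.length (w * cs.simple i)
    then MonoidAlgebra.of F W w else 0

namespace StmtAux

open CoxeterSystem DihedralGroup

variable {n : ℕ} {W : Type*} [Group W] (cs : CoxeterSystem (CoxeterMatrix.I (n - 2)) W)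

/-- alternating word beginning analysis: `qq k` ends with `s 1`. -/
noncomputable def qq (k : ℕ) : W := cs.wordProd (alternatingWord 0 1 k)

noncomputable def pp (k : ℕ) : W := cs.wordProd (alternatingWord 1 0 k)

lemma hM (hn : 4 ≤ n) : (CoxeterMatrix.I (n - 2)) 0 1 = n := by
  show (if (0 : Fin 2) = 1 then 1 else (n-2) + 2) = n
  rw [if_neg (by decide)]; omega

lemma hM' (hn : 4 ≤ n) : (CoxeterMatrix.I (n - 2)) 1 0 = n := by
  show (if (1 : Fin 2) = 0 then 1 else (n-2) + 2) = n
  rw [if_neg (by decide)]; omega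

@[simp] lemma qq_zero : qq cs 0 = 1 := by simp [qq, alternatingWord]

@[simp] lemma pp_zero : pp cs 0 = 1 := by simp [pp, alternatingWord]

lemma qq_succ (k : ℕ) : qq cs (k+1) = pp cs k * cs.simple 1 := by
  rw [qq, pp, alternatingWord_succ, cs.wordProd_concat]

lemma pp_succ (k : ℕ) : pp cs (k+1) = qq cs k * cs.simple 0 := by
  rw [qq, pp, alternatingWord_succ, cs.wordProd_concat]

lemma qq_eq (k : ℕ) :
    qq cs k = (if Even k then 1 else cs.simple 1) * (cs.simple 0 * cs.simple 1) ^ (k / 2) :=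
  cs.prod_alternatingWord_eq_mul_pow 0 1 k

lemma pp_eq (k : ℕ) :
    pp cs k = (if Even k then 1 else cs.simple 0) * (cs.simple 1 * cs.simple 0) ^ (k / 2) :=
  cs.prod_alternatingWord_eq_mul_pow 1 0 k

lemma t_pow (hn : 4 ≤ n) : (cs.simple 0 * cs.simple 1) ^ n = 1 := by
  have := cs.simple_mul_simple_pow 0 1
  rwa [hM hn] at this

lemma t_pow_inv (hn : 4 ≤ n) {j : ℕ} (hj : j ≤ n) :
    ((cs.simple 0 * cs.simple 1) ^ j)⁻¹ = (cs.simple 0 * cs.simple 1) ^ (n - j) := by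
  apply inv_eq_of_mul_eq_one_left
  rw [← pow_add]
  rw [show n - j + j = n by omega]
  exact t_pow cs hn

lemma hts : cs.simple 1 * cs.simple 0 = (cs.simple 0 * cs.simple 1)⁻¹ := by
  rw [mul_inv_rev, cs.inv_simple, cs.inv_simple]

lemma b_conj (k : ℕ) :
    cs.simple 1 * (cs.simple 0 * cs.simple 1) ^ k
      = ((cs.simple 0 * cs.simple 1) ^ k)⁻¹ * cs.simple 1 := by
  have h : SemiconjBy (cs.simple 1) (cs.simple 0 * cs.simple 1)
      ((cs.simple 0 * cs.simple 1))⁻¹ := by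
    rw [SemiconjBy, ← hts, ← mul_assoc]
  have := (h.pow_right k).eq
  rwa [inv_pow] at this

lemma t_mul_b (hn : 4 ≤ n) {m : ℕ} (hm : m ≤ n) :
    (cs.simple 0 * cs.simple 1) ^ m * cs.simple 1
      = cs.simple 1 * (cs.simple 0 * cs.simple 1) ^ (n - m) := by
  rw [b_conj, t_pow_inv cs hn (by omega : n - m ≤ n)]
  rw [show n - (n - m) = m by omega]

lemma qq_period (hn : 4 ≤ n) (k : ℕ) : qq cs (k + 2 * n) = qq cs k := by
  rw [qq_eq, qq_eq]
  have h1 : Even (k + 2*n) ↔ Even k := by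
    rw [Nat.even_add]
    constructor
    · intro h; exact h.mpr ⟨n, by omega⟩
    · intro h; exact ⟨fun _ => ⟨n, by omega⟩, fun _ => h⟩
  have h2 : (k + 2*n)/2 = k/2 + n := by omega
  rw [h2, pow_add, t_pow cs hn, mul_one, if_congr h1 rfl rfl]

lemma pp_eq_qq (hn : 4 ≤ n) {k : ℕ} (hk : k ≤ 2 * n) : pp cs k = qq cs (2 * n - k) := by
  rcases Nat.even_or_odd k with he | ho
  · obtain ⟨m, rfl⟩ := he
    have hm : m ≤ n := by omega
    rw [pp_eq, qq_eq, if_pos ⟨m, rfl⟩, if_pos ⟨n - m, by omega⟩, one_mul, one_mul]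
    rw [hts, inv_pow, show (m+m)/2 = m by omega, t_pow_inv cs hn hm,
      show (2*n - (m+m))/2 = n - m by omega]
  · obtain ⟨m, rfl⟩ := ho
    have hm : m < n := by omega
    rw [pp_eq, qq_eq, if_neg (by rintro ⟨c, hc⟩; omega),
      if_neg (by rintro ⟨c, hc⟩; omega)]
    have sc : SemiconjBy (cs.simple 0) (cs.simple 1 * cs.simple 0)
        (cs.simple 0 * cs.simple 1) := by
      rw [SemiconjBy, ← mul_assoc]
    have sc' : SemiconjBy (cs.simple 1) (cs.simple 0 * cs.simple 1)
        (cs.simple 1 * cs.simple 0) := by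
      rw [SemiconjBy, ← mul_assoc]
    rw [show (2*m+1)/2 = m by omega, show (2*n - (2*m+1))/2 = n - m - 1 by omega]
    rw [(sc.pow_right m).eq]
    have key : cs.simple 1 * ((cs.simple 0 * cs.simple 1) ^ m * cs.simple 0)
        = (cs.simple 0 * cs.simple 1) ^ (n - m - 1) := by
      calc cs.simple 1 * ((cs.simple 0 * cs.simple 1) ^ m * cs.simple 0)
          = (cs.simple 1 * (cs.simple 0 * cs.simple 1) ^ m) * cs.simple 0 := by
            rw [mul_assoc]
        _ = ((cs.simple 1 * cs.simple 0) ^ m * cs.simple 1) * cs.simple 0 := by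
            rw [(sc'.pow_right m).eq]
        _ = (cs.simple 1 * cs.simple 0) ^ (m + 1) := by rw [pow_succ, mul_assoc]
        _ = ((cs.simple 0 * cs.simple 1) ^ (m + 1))⁻¹ := by rw [hts, inv_pow]
        _ = (cs.simple 0 * cs.simple 1) ^ (n - (m + 1)) := t_pow_inv cs hn (by omega)
        _ = (cs.simple 0 * cs.simple 1) ^ (n - m - 1) := by rw [Nat.sub_sub]
    calc (cs.simple 0 * cs.simple 1) ^ m * cs.simple 0
        = (cs.simple 1 * cs.simple 1) * ((cs.simple 0 * cs.simple 1) ^ m * cs.simple 0) := by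
          rw [cs.simple_mul_simple_self, one_mul]
      _ = cs.simple 1 * (cs.simple 0 * cs.simple 1) ^ (n - m - 1) := by
          rw [mul_assoc, key]


lemma qq_mul_even (k : ℕ) {j : ℕ} (hj : Even j) :
    qq cs k * qq cs j = qq cs (k + j) := by
  obtain ⟨c, rfl⟩ := hj
  rw [qq_eq cs (c + c), if_pos ⟨c, rfl⟩, one_mul, qq_eq cs k, qq_eq cs (k + (c+c))]
  have h1 : Even (k + (c + c)) ↔ Even k := by
    rw [Nat.even_add]
    constructor
    · intro h; exact h.mpr ⟨c, rfl⟩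
    · intro h; exact ⟨fun _ => ⟨c, rfl⟩, fun _ => h⟩
  rw [if_congr h1 rfl rfl, show (k + (c+c))/2 = k/2 + ((c+c)/2) by omega, pow_add, mul_assoc]

lemma qq_mul_odd (hn : 4 ≤ n) {k j : ℕ} (hk : k ≤ 2 * n) (hj : Odd j) :
    qq cs k * qq cs j = qq cs ((2 * n - k) + j) := by
  obtain ⟨c, rfl⟩ := hj
  rw [qq_eq cs (2*c+1), if_neg (by rintro ⟨d, hd⟩; omega), show (2*c+1)/2 = c by omega]
  rcases Nat.even_or_odd k with he | ho
  · obtain ⟨m, rfl⟩ := he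
    have hm : m ≤ n := by omega
    rw [qq_eq cs (m+m), if_pos ⟨m, rfl⟩, one_mul, show (m+m)/2 = m by omega]
    rw [qq_eq cs (2*n - (m+m) + (2*c+1)), if_neg (by rintro ⟨d, hd⟩; omega),
      show (2*n - (m+m) + (2*c+1))/2 = (n - m) + c by omega]
    calc (cs.simple 0 * cs.simple 1) ^ m * (cs.simple 1 * (cs.simple 0 * cs.simple 1) ^ c)
        = ((cs.simple 0 * cs.simple 1) ^ m * cs.simple 1) * (cs.simple 0 * cs.simple 1) ^ c := by
          rw [mul_assoc]
      _ = (cs.simple 1 * (cs.simple 0 * cs.simple 1) ^ (n - m)) * (cs.simple 0 * cs.simple 1) ^ c := by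
          rw [t_mul_b cs hn hm]
      _ = cs.simple 1 * (cs.simple 0 * cs.simple 1) ^ (n - m + c) := by
          rw [mul_assoc, pow_add]
  · obtain ⟨m, rfl⟩ := ho
    have hm : m < n := by omega
    rw [qq_eq cs (2*m+1), if_neg (by rintro ⟨d, hd⟩; omega), show (2*m+1)/2 = m by omega]
    rw [qq_eq cs (2*n - (2*m+1) + (2*c+1)), if_pos ⟨(n-m-1)+(c+1), by omega⟩, one_mul,
      show (2*n - (2*m+1) + (2*c+1))/2 = (n - m) + c by omega]
    calc cs.simple 1 * (cs.simple 0 * cs.simple 1) ^ m * (cs.simple 1 * (cs.simple 0 * cs.simple 1) ^ c)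
        = cs.simple 1 * (((cs.simple 0 * cs.simple 1) ^ m * cs.simple 1) * (cs.simple 0 * cs.simple 1) ^ c) := by
          rw [mul_assoc, mul_assoc]
      _ = cs.simple 1 * ((cs.simple 1 * (cs.simple 0 * cs.simple 1) ^ (n - m)) * (cs.simple 0 * cs.simple 1) ^ c) := by
          rw [t_mul_b cs hn (le_of_lt hm)]
      _ = (cs.simple 1 * cs.simple 1) * ((cs.simple 0 * cs.simple 1) ^ (n - m) * (cs.simple 0 * cs.simple 1) ^ c) := by
          rw [mul_assoc, mul_assoc]
      _ = (cs.simple 0 * cs.simple 1) ^ (n - m + c) := by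
          rw [cs.simple_mul_simple_self, one_mul, pow_add]

lemma qq_mul_s0 (hn : 4 ≤ n) {k : ℕ} (hk : k < 2 * n) :
    qq cs k * cs.simple 0 = qq cs (2 * n - (k + 1)) := by
  rw [← pp_succ, pp_eq_qq cs hn (by omega : k + 1 ≤ 2 * n)]

lemma qq_mul_s1 (hn : 4 ≤ n) {k : ℕ} (hk : 1 ≤ k) (hk2 : k ≤ 2 * n) :
    qq cs k * cs.simple 1 = qq cs (2 * n - (k - 1)) := by
  obtain ⟨k', rfl⟩ : ∃ k', k = k' + 1 := ⟨k - 1, by omega⟩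
  rw [qq_succ, mul_assoc, cs.simple_mul_simple_self, mul_one,
    pp_eq_qq cs hn (by omega : k' ≤ 2 * n), show k' + 1 - 1 = k' from rfl]

lemma step_qq (hn : 4 ≤ n) {k : ℕ} (hk : k < 2 * n) (i : Fin 2) :
    ∃ j, j < 2 * n ∧ qq cs j = qq cs k * cs.simple i := by
  have h01 : i = 0 ∨ i = 1 := by
    rcases i with ⟨iv, hiv⟩
    interval_cases iv
    · exact Or.inl rfl
    · exact Or.inr rfl
  rcases h01 with rfl | rfl
  · exact ⟨2*n - (k+1), by omega, (qq_mul_s0 cs hn (by omega)).symm⟩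
  · rcases Nat.eq_zero_or_pos k with rfl | hk1
    · refine ⟨1, by omega, ?_⟩
      rw [qq_zero, one_mul]
      have h := qq_succ cs 0
      rw [pp_zero, one_mul] at h
      exact h
    · rcases (by omega : k = 1 ∨ 2 ≤ k) with rfl | hk2
      · refine ⟨0, by omega, ?_⟩
        have h3 : qq cs 1 * cs.simple 1 = qq cs (2*n) := by
          simpa using qq_mul_s1 cs hn le_rfl (by omega)
        have h4 : qq cs (0 + 2*n) = qq cs 0 := qq_period cs hn 0
        rw [h3, ← h4, zero_add]
      · exact ⟨2*n - (k-1), by omega, (qq_mul_s1 cs hn (by omega) (by omega)).symm⟩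

lemma exists_qq (hn : 4 ≤ n) (w : W) : ∃ k, k < 2 * n ∧ qq cs k = w := by
  obtain ⟨ω, rfl⟩ := cs.wordProd_surjective w
  induction ω using List.reverseRecOn with
  | nil => exact ⟨0, by omega, by simp⟩
  | append_singleton ω i ih =>
    obtain ⟨k, hk, hq⟩ := ih
    rw [cs.wordProd_append, cs.wordProd_singleton, ← hq]
    exact step_qq cs hn hk i


/-- The lift to the dihedral group. -/
noncomputable def theta (hn : 4 ≤ n) : W →* DihedralGroup n :=
  cs.lift ⟨fun i => if i = 0 then DihedralGroup.sr 0 else DihedralGroup.sr 1, by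
    intro i i'
    have h01 : ∀ j : Fin 2, j = 0 ∨ j = 1 := by
      intro j
      rcases j with ⟨jv, hjv⟩
      interval_cases jv
      · exact Or.inl rfl
      · exact Or.inr rfl
    rcases h01 i with rfl | rfl <;> rcases h01 i' with rfl | rfl
    · rw [show (CoxeterMatrix.I (n-2)) 0 0 = 1 from (CoxeterMatrix.I (n-2)).diagonal 0]
      simp
    · rw [hM hn]
      simp only [if_pos rfl, if_neg (by decide : (1 : Fin 2) ≠ 0), if_true]
      rw [sr_mul_sr]
      simpa [sub_zero] using r_one_pow_n (n := n)
    · rw [hM' hn]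
      simp only [if_pos rfl, if_neg (by decide : (1 : Fin 2) ≠ 0), if_true]
      rw [sr_mul_sr]
      have : (r (0 - 1) : DihedralGroup n) = (r 1)⁻¹ := by
        rw [zero_sub]; rfl
      rw [this, inv_pow, r_one_pow_n, inv_one]
    · rw [show (CoxeterMatrix.I (n-2)) 1 1 = 1 from (CoxeterMatrix.I (n-2)).diagonal 1]
      simp⟩

lemma theta_s0 (hn : 4 ≤ n) : theta cs hn (cs.simple 0) = sr 0 := by
  exact (cs.lift_apply_simple _ 0).trans (by simp)

lemma theta_s1 (hn : 4 ≤ n) : theta cs hn (cs.simple 1) = sr 1 := by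
  exact (cs.lift_apply_simple _ 1).trans (by simp [(by decide : (1 : Fin 2) ≠ 0)])

lemma theta_qq (hn : 4 ≤ n) (k : ℕ) :
    theta cs hn (qq cs k)
      = if Even k then r ((k/2 : ℕ) : ZMod n) else sr (1 + ((k/2 : ℕ) : ZMod n)) := by
  rw [qq_eq, map_mul, map_pow, map_mul, theta_s0, theta_s1]
  have hr : (sr 0 * sr 1 : DihedralGroup n) ^ (k/2) = r ((k/2 : ℕ) : ZMod n) := by
    rw [sr_mul_sr, sub_zero, r_one_pow]
  rw [hr]
  rcases Nat.even_or_odd k with he | ho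
  · rw [if_pos he, if_pos he, map_one, one_mul]
  · rw [if_neg (Nat.not_even_iff_odd.mpr ho), if_neg (Nat.not_even_iff_odd.mpr ho),
      theta_s1, sr_mul_r]

lemma qq_inj (hn : 4 ≤ n) {k j : ℕ} (hk : k < 2 * n) (hj : j < 2 * n)
    (h : qq cs k = qq cs j) : k = j := by
  have h2 := congrArg (theta cs hn) h
  rw [theta_qq, theta_qq] at h2
  have hnpos : 0 < n := by omega
  rcases Nat.even_or_odd k with he | ho <;> rcases Nat.even_or_odd j with he' | ho'
  · rw [if_pos he, if_pos he'] at h2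
    have h3 : ((k/2 : ℕ) : ZMod n) = ((j/2 : ℕ) : ZMod n) := by
      injection h2
    have h4 := congrArg ZMod.val h3
    rw [ZMod.val_natCast_of_lt (by omega), ZMod.val_natCast_of_lt (by omega)] at h4
    obtain ⟨a, rfl⟩ := he; obtain ⟨b, rfl⟩ := he'
    omega
  · rw [if_pos he, if_neg (Nat.not_even_iff_odd.mpr ho')] at h2
    exact absurd h2 (by simp)
  · rw [if_neg (Nat.not_even_iff_odd.mpr ho), if_pos he'] at h2
    exact absurd h2 (by simp)
  · rw [if_neg (Nat.not_even_iff_odd.mpr ho), if_neg (Nat.not_even_iff_odd.mpr ho')] at h2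
    have h3 : (1 : ZMod n) + ((k/2 : ℕ) : ZMod n) = 1 + ((j/2 : ℕ) : ZMod n) := by
      injection h2
    have h3' : ((k/2 : ℕ) : ZMod n) = ((j/2 : ℕ) : ZMod n) := by
      exact add_left_cancel h3
    have h4 := congrArg ZMod.val h3'
    rw [ZMod.val_natCast_of_lt (by omega), ZMod.val_natCast_of_lt (by omega)] at h4
    obtain ⟨a, rfl⟩ := ho; obtain ⟨b, rfl⟩ := ho'
    omega


lemma reduced_alt (ω : List (Fin 2)) (hω : cs.IsReduced ω) :
    ω = alternatingWord 0 1 ω.length ∨ ω = alternatingWord 1 0 ω.length := by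
  induction ω with
  | nil => exact Or.inl rfl
  | cons i ω' ih =>
    have hω' : cs.IsReduced ω' := by
      have := hω.drop 1
      simpa using this
    rcases ω' with _ | ⟨j, rest⟩
    · have h01 : i = 0 ∨ i = 1 := by
        rcases i with ⟨iv, hiv⟩
        interval_cases iv
        · exact Or.inl rfl
        · exact Or.inr rfl
      rcases h01 with rfl | rfl
      · right; rfl
      · left; rfl
    · -- i :: j :: rest, reduced
      have hne : i ≠ j := by
        rintro rfl
        have : cs.wordProd (i :: i :: rest) = cs.wordProd rest := by
          rw [cs.wordProd_cons, cs.wordProd_cons, cs.simple_mul_simple_cancel_left]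
        have hlen := hω
        rw [CoxeterSystem.IsReduced, this] at hlen
        have := cs.length_wordProd_le rest
        simp at hlen
        omega
      rcases ih hω' with h | h
      · left
        have h2 := h
        rw [show (j :: rest).length = rest.length + 1 from rfl,
          alternatingWord_succ' 0 1 rest.length] at h2
        have hhead : j = (if Even rest.length then 1 else 0) := by
          injection h2
        have hi : i = (if Even (rest.length + 1) then 1 else 0) := by
          have h01 : i = 0 ∨ i = 1 := by
            rcases i with ⟨iv, hiv⟩
            interval_cases iv
            · exact Or.inl rfl
            · exact Or.inr rfl
          rcases Nat.even_or_odd rest.length with he | ho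
          · rw [if_neg (by rintro ⟨c,hc⟩; obtain ⟨d, hd⟩ := he; omega)]
            rcases h01 with rfl | rfl
            · rfl
            · rw [hhead, if_pos he] at hne; exact absurd rfl hne
          · rw [if_pos (by obtain ⟨c,hc⟩ := ho; exact ⟨c+1, by omega⟩)]
            rcases h01 with rfl | rfl
            · rw [hhead, if_neg (Nat.not_even_iff_odd.mpr ho)] at hne
              exact absurd rfl hne
            · rfl
        show i :: (j :: rest) = alternatingWord 0 1 ((j :: rest).length + 1)
        rw [alternatingWord_succ' 0 1, ← h,
          show (j :: rest).length = rest.length + 1 from rfl, ← hi]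
      · right
        have h2 := h
        rw [show (j :: rest).length = rest.length + 1 from rfl,
          alternatingWord_succ' 1 0 rest.length] at h2
        have hhead : j = (if Even rest.length then 0 else 1) := by
          injection h2
        have hi : i = (if Even (rest.length + 1) then 0 else 1) := by
          have h01 : i = 0 ∨ i = 1 := by
            rcases i with ⟨iv, hiv⟩
            interval_cases iv
            · exact Or.inl rfl
            · exact Or.inr rfl
          rcases Nat.even_or_odd rest.length with he | ho
          · rw [if_neg (by rintro ⟨c,hc⟩; obtain ⟨d, hd⟩ := he; omega)]
            rcases h01 with rfl | rfl
            · rw [hhead, if_pos he] at hne; exact absurd rfl hne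
            · rfl
          · rw [if_pos (by obtain ⟨c,hc⟩ := ho; exact ⟨c+1, by omega⟩)]
            rcases h01 with rfl | rfl
            · rfl
            · rw [hhead, if_neg (Nat.not_even_iff_odd.mpr ho)] at hne
              exact absurd rfl hne
        show i :: (j :: rest) = alternatingWord 1 0 ((j :: rest).length + 1)
        rw [alternatingWord_succ' 1 0, ← h,
          show (j :: rest).length = rest.length + 1 from rfl, ← hi]


lemma length_qq (hn : 4 ≤ n) {k : ℕ} (hk : k ≤ n) : cs.length (qq cs k) = k := by
  have hle : cs.length (qq cs k) ≤ k := by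
    have := cs.length_wordProd_le (alternatingWord 0 1 k)
    rwa [CoxeterSystem.length_alternatingWord] at this
  obtain ⟨ω, hlen, hw⟩ : ∃ ω : List (Fin 2), ω.length = cs.length (qq cs k) ∧ qq cs k = cs.wordProd ω := by
    obtain ⟨ω, h1, h2⟩ := cs.exists_isReduced (qq cs k); exact ⟨ω, by rw [h2]; exact h1.symm, h2⟩
  have hred : cs.IsReduced ω := by rw [CoxeterSystem.IsReduced, ← hw, hlen]
  have hm : ω.length ≤ k := by omega
  rcases reduced_alt cs ω hred with h | h
  · have heq : qq cs k = qq cs ω.length := by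
      rw [hw]; nth_rewrite 1 [h]; rfl
    have := qq_inj cs hn (by omega) (by omega) heq
    omega
  · have heq : qq cs k = pp cs ω.length := by rw [pp, ← h, ← hw]
    rcases Nat.eq_zero_or_pos ω.length with h0 | h1
    · rw [h0] at heq
      rw [pp_zero, ← qq_zero cs] at heq
      have := qq_inj cs hn (by omega) (by omega) heq
      omega
    · rw [pp_eq_qq cs hn (by omega : ω.length ≤ 2 * n)] at heq
      have := qq_inj cs hn (by omega) (by omega) heq
      omega

lemma length_pp (hn : 4 ≤ n) {k : ℕ} (hk : k ≤ n) : cs.length (pp cs k) = k := by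
  have hle : cs.length (pp cs k) ≤ k := by
    have := cs.length_wordProd_le (alternatingWord 1 0 k)
    rwa [CoxeterSystem.length_alternatingWord] at this
  obtain ⟨ω, hlen, hw⟩ : ∃ ω : List (Fin 2), ω.length = cs.length (pp cs k) ∧ pp cs k = cs.wordProd ω := by
    obtain ⟨ω, h1, h2⟩ := cs.exists_isReduced (pp cs k); exact ⟨ω, by rw [h2]; exact h1.symm, h2⟩
  have hred : cs.IsReduced ω := by rw [CoxeterSystem.IsReduced, ← hw, hlen]
  have hm : ω.length ≤ k := by omega
  rcases Nat.eq_zero_or_pos k with rfl | hk1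
  · interval_cases hml : ω.length
    · rw [hlen] at hml; omega
  rcases reduced_alt cs ω hred with h | h
  · have heq : pp cs k = qq cs ω.length := by
      rw [hw]; nth_rewrite 1 [h]; rfl
    rw [pp_eq_qq cs hn (by omega : k ≤ 2 * n)] at heq
    have := qq_inj cs hn (by omega) (by omega) heq
    omega
  · have heq : pp cs k = pp cs ω.length := by
      rw [hw]; nth_rewrite 1 [h]; rfl
    rcases Nat.eq_zero_or_pos ω.length with h0 | h1
    · rw [h0, pp_zero] at heq
      rw [pp_eq_qq cs hn (by omega : k ≤ 2 * n), ← qq_zero cs] at heq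
      have := qq_inj cs hn (by omega) (by omega) heq
      omega
    · rw [pp_eq_qq cs hn (by omega : k ≤ 2 * n),
        pp_eq_qq cs hn (by omega : ω.length ≤ 2 * n)] at heq
      have := qq_inj cs hn (by omega) (by omega) heq
      omega

lemma asc0 (hn : 4 ≤ n) {k : ℕ} (hk : k < n) :
    cs.length (qq cs k) < cs.length (qq cs k * cs.simple 0) := by
  rw [← pp_succ, length_qq cs hn (by omega), length_pp cs hn (by omega)]
  omega

lemma desc0 (hn : 4 ≤ n) {k : ℕ} (h1 : 1 ≤ k) (h2 : k ≤ n) :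
    ¬ cs.length (pp cs k) < cs.length (pp cs k * cs.simple 0) := by
  obtain ⟨k', rfl⟩ : ∃ k', k = k' + 1 := ⟨k - 1, by omega⟩
  have e1 : pp cs (k' + 1) * cs.simple 0 = qq cs k' := by
    rw [pp_succ, mul_assoc, cs.simple_mul_simple_self, mul_one]
  rw [e1, length_qq cs hn (by omega), length_pp cs hn (by omega)]
  omega

lemma asc1 (hn : 4 ≤ n) {k : ℕ} (hk : k < n) :
    cs.length (pp cs k) < cs.length (pp cs k * cs.simple 1) := by
  rw [← qq_succ, length_qq cs hn (by omega), length_pp cs hn (by omega)]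
  omega

lemma desc1 (hn : 4 ≤ n) {k : ℕ} (h1 : 1 ≤ k) (h2 : k ≤ n) :
    ¬ cs.length (qq cs k) < cs.length (qq cs k * cs.simple 1) := by
  obtain ⟨k', rfl⟩ : ∃ k', k = k' + 1 := ⟨k - 1, by omega⟩
  have e1 : qq cs (k' + 1) * cs.simple 1 = pp cs k' := by
    rw [qq_succ, mul_assoc, cs.simple_mul_simple_self, mul_one]
  rw [e1, length_qq cs hn (by omega), length_pp cs hn (by omega)]
  omega


section Algebra

variable (F : Type*) [Field F]

/-- Sum of `n` consecutive `qq`'s starting at `a`. -/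
noncomputable def SS (a : ℕ) : MonoidAlgebra F W :=
  ∑ k ∈ Finset.range n, MonoidAlgebra.of F W (qq cs (a + k))

/-- Sum over the whole group. -/
noncomputable def X3 : MonoidAlgebra F W :=
  ∑ k ∈ Finset.range (2 * n), MonoidAlgebra.of F W (qq cs k)

lemma SS_period (hn : 4 ≤ n) (a : ℕ) : SS cs F (a + 2 * n) = SS cs F a := by
  unfold SS
  refine Finset.sum_congr rfl fun k _ => ?_
  rw [show a + 2 * n + k = (a + k) + 2 * n by omega, qq_period cs hn]

lemma sum_shift {A : Type*} [AddCommGroup A] (f : ℕ → A) (m : ℕ)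
    (hf : ∀ k, f (k + m) = f k) (a : ℕ) :
    ∑ k ∈ Finset.range m, f (a + k) = ∑ k ∈ Finset.range m, f k := by
  induction a with
  | zero => simp
  | succ a ih =>
    rw [← ih]
    have h1 := Finset.sum_range_succ' (fun k => f (a + k)) m
    rw [Finset.sum_range_succ] at h1
    have h2 : f (a + m) = f (a + 0) := by rw [add_zero, hf]
    rw [h2] at h1
    have h3 : (∑ k ∈ Finset.range m, f (a + (k + 1)))
        = ∑ k ∈ Finset.range m, f (a + 1 + k) :=
      Finset.sum_congr rfl fun k _ => by rw [show a + (k + 1) = a + 1 + k by omega]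
    rw [h3] at h1
    exact add_right_cancel h1.symm

lemma X3_shift (hn : 4 ≤ n) (a : ℕ) :
    (∑ k ∈ Finset.range (2 * n), MonoidAlgebra.of F W (qq cs (a + k))) = X3 cs F :=
  sum_shift (fun k => MonoidAlgebra.of F W (qq cs k)) (2 * n)
    (fun k => by
      show MonoidAlgebra.of F W (qq cs (k + 2 * n)) = MonoidAlgebra.of F W (qq cs k)
      rw [qq_period cs hn]) a

lemma SS_add_SS (hn : 4 ≤ n) (a : ℕ) : SS cs F a + SS cs F (n + a) = X3 cs F := by
  rw [← X3_shift cs F hn a, two_mul, Finset.sum_range_add]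
  unfold SS
  congr 1
  refine Finset.sum_congr rfl fun k _ => ?_
  rw [show n + a + k = a + (n + k) by omega]

lemma SS_mul_of (hn : 4 ≤ n) {a : ℕ} (ha : a ≤ n + 1) (b : ℕ) :
    SS cs F a * MonoidAlgebra.of F W (qq cs b)
      = if Even b then SS cs F (a + b) else SS cs F ((n + 1 - a) + b) := by
  unfold SS
  rw [Finset.sum_mul]
  rcases Nat.even_or_odd b with he | ho
  · rw [if_pos he]
    refine Finset.sum_congr rfl fun k _ => ?_
    rw [← map_mul, qq_mul_even cs (a + k) he, show a + k + b = a + b + k by omega]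
  · rw [if_neg (Nat.not_even_iff_odd.mpr ho)]
    have h1 : ∀ k ∈ Finset.range n,
        MonoidAlgebra.of F W (qq cs (a + k)) * MonoidAlgebra.of F W (qq cs b)
        = MonoidAlgebra.of F W (qq cs ((2 * n - (a + k)) + b)) := by
      intro k hk
      rw [Finset.mem_range] at hk
      rw [← map_mul, qq_mul_odd cs hn (by omega) ho]
    rw [Finset.sum_congr rfl h1]
    have h2 := Finset.sum_range_reflect
      (fun k => MonoidAlgebra.of F W (qq cs ((n + 1 - a + b) + k))) n
    rw [← h2]
    refine Finset.sum_congr rfl fun k hk => ?_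
    rw [Finset.mem_range] at hk
    rw [show n + 1 - a + b + (n - 1 - k) = 2 * n - (a + k) + b by omega]

end Algebra


section Ident

open Classical

variable (F : Type*) [Field F] [Fintype W]

lemma qq_one : qq cs 1 = cs.simple 1 := by
  have h := qq_succ cs 0
  rw [pp_zero, one_mul] at h
  exact h

lemma univ_sum (hn : 4 ≤ n) {A : Type*} [AddCommMonoid A] (g : W → A) :
    ∑ w : W, g w = ∑ k ∈ Finset.range (2 * n), g (qq cs k) := by
  have himg : (Finset.range (2 * n)).image (qq cs) = Finset.univ := by
    apply Finset.eq_univ_of_forall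
    intro w
    obtain ⟨k, hk, hq⟩ := exists_qq cs hn w
    exact Finset.mem_image.mpr ⟨k, Finset.mem_range.mpr hk, hq⟩
  classical
  rw [← himg, Finset.sum_image (fun k hk j hj h =>
    qq_inj cs hn (Finset.mem_range.mp hk) (Finset.mem_range.mp hj) h)]

lemma X3_univ (hn : 4 ≤ n) : X3 cs F = ∑ w : W, MonoidAlgebra.of F W w := by
  rw [univ_sum cs hn (fun w => MonoidAlgebra.of F W w)]
  rfl

lemma x3_eq (hn : 4 ≤ n) : descentElt F cs (∅ : Set (Fin 2)) = X3 cs F := by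
  rw [descentElt, X3_univ cs F hn]
  refine Finset.sum_congr rfl fun w _ => ?_
  rw [if_pos (fun i hi => absurd hi (Set.notMem_empty i))]

lemma x1_eq (hn : 4 ≤ n) : descentElt F cs ({0} : Set (Fin 2)) = SS cs F 0 := by
  rw [descentElt, univ_sum cs hn, two_mul, Finset.sum_range_add]
  have h0 : SS cs F 0 = (SS cs F 0) + 0 := by rw [add_zero]
  rw [h0]
  congr 1
  · unfold SS
    refine Finset.sum_congr rfl fun k hk => ?_
    rw [Finset.mem_range] at hk
    rw [if_pos, zero_add]
    intro i hi
    rw [Set.mem_singleton_iff] at hi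
    subst hi
    exact asc0 cs hn hk
  · refine Finset.sum_eq_zero fun k hk => ?_
    rw [Finset.mem_range] at hk
    have hq : qq cs (n + k) = pp cs (n - k) := by
      rw [pp_eq_qq cs hn (by omega : n - k ≤ 2 * n)]
      congr 1
      omega
    rw [if_neg]
    intro hcond
    have := hcond 0 rfl
    rw [hq] at this
    exact desc0 cs hn (by omega) (by omega) this

lemma x2_eq (hn : 4 ≤ n) : descentElt F cs ({1} : Set (Fin 2)) = SS cs F (n + 1) := by
  rw [descentElt, univ_sum cs hn, show 2 * n = (n + 1) + (n - 1) by omega,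
    Finset.sum_range_add]
  have hSS : SS cs F (n + 1)
      = (∑ k ∈ Finset.range (n - 1), MonoidAlgebra.of F W (qq cs (n + 1 + k)))
        + MonoidAlgebra.of F W (qq cs 0) := by
    unfold SS
    have hrange : Finset.range n = Finset.range ((n - 1) + 1) := by
      rw [show (n - 1) + 1 = n by omega]
    rw [hrange, Finset.sum_range_succ]
    congr 1
    rw [show n + 1 + (n - 1) = 0 + 2 * n by omega, qq_period cs hn]
  rw [hSS]
  rw [add_comm ((∑ k ∈ Finset.range (n - 1), MonoidAlgebra.of F W (qq cs (n + 1 + k))))]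
  congr 1
  · rw [Finset.sum_eq_single_of_mem 0 (Finset.mem_range.mpr (by omega))]
    · rw [if_pos]
      intro i hi
      rw [Set.mem_singleton_iff] at hi
      subst hi
      have hq : qq cs 0 * cs.simple 1 = qq cs 1 := by
        rw [qq_zero, one_mul, qq_one]
      rw [hq, length_qq cs hn (by omega), length_qq cs hn (by omega)]
      omega
    · intro k hk hne
      rw [Finset.mem_range] at hk
      rw [if_neg]
      intro hcond
      exact desc1 cs hn (by omega) (by omega) (hcond 1 rfl)
  · refine Finset.sum_congr rfl fun k hk => ?_
    rw [Finset.mem_range] at hk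
    have hq : qq cs (n + 1 + k) = pp cs (n - 1 - k) := by
      rw [pp_eq_qq cs hn (by omega : n - 1 - k ≤ 2 * n)]
      congr 1
      omega
    rw [if_pos]
    intro i hi
    rw [Set.mem_singleton_iff] at hi
    subst hi
    rw [hq]
    exact asc1 cs hn (by omega)

end Ident


section Prod

open Classical

variable (F : Type*) [Field F] [Fintype W]

lemma of_mul_univ (g : W) :
    MonoidAlgebra.of F W g * (∑ w : W, MonoidAlgebra.of F W w) = ∑ w : W, MonoidAlgebra.of F W w := by
  rw [Finset.mul_sum]
  simp_rw [← map_mul]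
  exact Fintype.sum_bijective _ (Group.mulLeft_bijective g) _ _ (fun x => rfl)

lemma univ_mul_of (g : W) :
    (∑ w : W, MonoidAlgebra.of F W w) * MonoidAlgebra.of F W g = ∑ w : W, MonoidAlgebra.of F W w := by
  rw [Finset.sum_mul]
  simp_rw [← map_mul]
  exact Fintype.sum_bijective _ (Group.mulRight_bijective g) _ _ (fun x => rfl)

lemma of_mul_X3 (hn : 4 ≤ n) (g : W) :
    MonoidAlgebra.of F W g * X3 cs F = X3 cs F := by
  rw [X3_univ cs F hn]
  exact of_mul_univ F g

lemma X3_mul_of (hn : 4 ≤ n) (g : W) :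
    X3 cs F * MonoidAlgebra.of F W g = X3 cs F := by
  rw [X3_univ cs F hn]
  exact univ_mul_of F g

lemma SS_mul_X3 (hn : 4 ≤ n) (a : ℕ) : SS cs F a * X3 cs F = n • X3 cs F := by
  nth_rewrite 1 [SS]
  rw [Finset.sum_mul]
  have h1 : ∀ k ∈ Finset.range n,
      MonoidAlgebra.of F W (qq cs (a + k)) * X3 cs F = X3 cs F :=
    fun k _ => of_mul_X3 cs F hn _
  rw [Finset.sum_congr rfl h1, Finset.sum_const, Finset.card_range]

lemma X3_mul_SS (hn : 4 ≤ n) (a : ℕ) : X3 cs F * SS cs F a = n • X3 cs F := by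
  nth_rewrite 1 [SS]
  rw [Finset.mul_sum]
  have h1 : ∀ k ∈ Finset.range n,
      X3 cs F * MonoidAlgebra.of F W (qq cs (a + k)) = X3 cs F :=
    fun k _ => X3_mul_of cs F hn _
  rw [Finset.sum_congr rfl h1, Finset.sum_const, Finset.card_range]

lemma X3_mul_X3 (hn : 4 ≤ n) : X3 cs F * X3 cs F = (2 * n) • X3 cs F := by
  nth_rewrite 1 [X3]
  rw [Finset.sum_mul]
  have h1 : ∀ k ∈ Finset.range (2 * n),
      MonoidAlgebra.of F W (qq cs k) * X3 cs F = X3 cs F :=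
    fun k _ => of_mul_X3 cs F hn _
  rw [Finset.sum_congr rfl h1, Finset.sum_const, Finset.card_range]

lemma SS_mul_SS (hn : 4 ≤ n) {a : ℕ} (ha : a ≤ n + 1) (b : ℕ) :
    SS cs F a * SS cs F b = ∑ j ∈ Finset.range n,
      (if Even (b + j) then SS cs F (a + (b + j)) else SS cs F ((n + 1 - a) + (b + j))) := by
  nth_rewrite 2 [SS]
  rw [Finset.mul_sum]
  exact Finset.sum_congr rfl fun j _ => SS_mul_of cs F hn ha (b + j)

-- telescoping sums
lemma tele_A (hn : 4 ≤ n) (m : ℕ) :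
    (∑ j ∈ Finset.range m, (if Even j then SS cs F j else SS cs F (n + 1 + j)))
      + (if Even m then SS cs F m else 0)
    = (m / 2) • X3 cs F + SS cs F 0 := by
  induction m with
  | zero => simp
  | succ m ih =>
    rw [Finset.sum_range_succ]
    rcases Nat.even_or_odd m with he | ho
    · have hm2 : m % 2 = 0 := Nat.even_iff.mp he
      rw [if_pos he] at ih ⊢
      rw [if_neg (by rw [Nat.even_add_one]; exact fun h => h he)]
      rw [add_zero, show (m + 1) / 2 = m / 2 by omega]
      exact ih
    · have hm2 : m % 2 = 1 := Nat.odd_iff.mp ho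
      have hne : ¬ Even m := Nat.not_even_iff_odd.mpr ho
      rw [if_neg hne] at ih ⊢
      rw [add_zero] at ih
      rw [if_pos (by rw [Nat.even_add_one]; exact hne)]
      have hsym := SS_add_SS cs F hn (m + 1)
      rw [show n + (m + 1) = n + 1 + m by omega] at hsym
      rw [show (m + 1) / 2 = m / 2 + 1 by omega, succ_nsmul]
      calc (∑ j ∈ Finset.range m, (if Even j then SS cs F j else SS cs F (n + 1 + j)))
            + SS cs F (n + 1 + m) + SS cs F (m + 1)
          = (∑ j ∈ Finset.range m, (if Even j then SS cs F j else SS cs F (n + 1 + j)))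
            + (SS cs F (m + 1) + SS cs F (n + 1 + m)) := by abel
        _ = (m / 2) • X3 cs F + SS cs F 0 + X3 cs F := by rw [hsym, ih]
        _ = (m / 2) • X3 cs F + X3 cs F + SS cs F 0 := by abel

lemma tele_B (hn : 4 ≤ n) (m : ℕ) :
    (∑ j ∈ Finset.range m, (if Even j then SS cs F (j + 2) else SS cs F (n + 1 + j)))
    = (m / 2) • X3 cs F + (if Even m then 0 else SS cs F (m + 1)) := by
  induction m with
  | zero => simp
  | succ m ih =>
    rw [Finset.sum_range_succ, ih]
    rcases Nat.even_or_odd m with he | ho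
    · have hm2 : m % 2 = 0 := Nat.even_iff.mp he
      rw [if_pos he, if_pos he, if_neg (by rw [Nat.even_add_one]; exact fun h => h he)]
      rw [show (m + 1) / 2 = m / 2 by omega, show m + 2 = m + 1 + 1 from rfl]
      abel
    · have hm2 : m % 2 = 1 := Nat.odd_iff.mp ho
      have hne : ¬ Even m := Nat.not_even_iff_odd.mpr ho
      rw [if_neg hne, if_neg hne, if_pos (by rw [Nat.even_add_one]; exact hne)]
      have hsym := SS_add_SS cs F hn (m + 1)
      rw [show n + (m + 1) = n + 1 + m by omega] at hsym
      rw [show (m + 1) / 2 = m / 2 + 1 by omega, succ_nsmul]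
      calc (m / 2) • X3 cs F + SS cs F (m + 1) + SS cs F (n + 1 + m)
          = (m / 2) • X3 cs F + (SS cs F (m + 1) + SS cs F (n + 1 + m)) := by abel
        _ = (m / 2) • X3 cs F + X3 cs F + 0 := by rw [hsym, add_zero]

lemma tele_C (hn : 4 ≤ n) (m : ℕ) :
    (∑ j ∈ Finset.range m, (if Even j then SS cs F (n + 1 + j) else SS cs F (j + 2)))
      + SS cs F 1
    = ((m + 1) / 2) • X3 cs F + (if Even m then SS cs F (m + 1) else 0) := by
  induction m with
  | zero => simp
  | succ m ih =>
    rw [Finset.sum_range_succ]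
    rcases Nat.even_or_odd m with he | ho
    · have hm2 : m % 2 = 0 := Nat.even_iff.mp he
      rw [if_pos he] at ih ⊢
      rw [if_neg (by rw [Nat.even_add_one]; exact fun h => h he), add_zero]
      have hsym := SS_add_SS cs F hn (m + 1)
      rw [show n + (m + 1) = n + 1 + m by omega] at hsym
      rw [show (m + 1 + 1) / 2 = (m + 1) / 2 + 1 by omega, succ_nsmul]
      calc (∑ j ∈ Finset.range m, (if Even j then SS cs F (n + 1 + j) else SS cs F (j + 2)))
            + SS cs F (n + 1 + m) + SS cs F 1
          = ((∑ j ∈ Finset.range m, (if Even j then SS cs F (n + 1 + j) else SS cs F (j + 2)))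
            + SS cs F 1) + SS cs F (n + 1 + m) := by abel
        _ = ((m + 1) / 2) • X3 cs F + (SS cs F (m + 1) + SS cs F (n + 1 + m)) := by
            rw [ih]; abel
        _ = ((m + 1) / 2) • X3 cs F + X3 cs F := by rw [hsym]
    · have hm2 : m % 2 = 1 := Nat.odd_iff.mp ho
      have hne : ¬ Even m := Nat.not_even_iff_odd.mpr ho
      rw [if_neg hne] at ih ⊢
      rw [add_zero] at ih
      rw [if_pos (by rw [Nat.even_add_one]; exact hne)]
      rw [show (m + 1 + 1) / 2 = (m + 1) / 2 by omega, show m + 2 = m + 1 + 1 from rfl]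
      calc (∑ j ∈ Finset.range m, (if Even j then SS cs F (n + 1 + j) else SS cs F (j + 2)))
            + SS cs F (m + 1 + 1) + SS cs F 1
          = ((∑ j ∈ Finset.range m, (if Even j then SS cs F (n + 1 + j) else SS cs F (j + 2)))
            + SS cs F 1) + SS cs F (m + 1 + 1) := by abel
        _ = ((m + 1) / 2) • X3 cs F + SS cs F (m + 1 + 1) := by rw [ih]

lemma tele_D (hn : 4 ≤ n) (m : ℕ) :
    (∑ j ∈ Finset.range m, (if Even j then SS cs F (n + 1 + j) else SS cs F j))
      + (if Even m then 0 else SS cs F m)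
    = ((m + 1) / 2) • X3 cs F := by
  induction m with
  | zero => simp
  | succ m ih =>
    rw [Finset.sum_range_succ]
    rcases Nat.even_or_odd m with he | ho
    · have hm2 : m % 2 = 0 := Nat.even_iff.mp he
      rw [if_pos he, add_zero] at ih
      rw [if_pos he, if_neg (by rw [Nat.even_add_one]; exact fun h => h he)]
      have hsym := SS_add_SS cs F hn (m + 1)
      rw [show n + (m + 1) = n + 1 + m by omega] at hsym
      rw [show (m + 1 + 1) / 2 = (m + 1) / 2 + 1 by omega, succ_nsmul]
      calc (∑ j ∈ Finset.range m, (if Even j then SS cs F (n + 1 + j) else SS cs F j))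
            + SS cs F (n + 1 + m) + SS cs F (m + 1)
          = (∑ j ∈ Finset.range m, (if Even j then SS cs F (n + 1 + j) else SS cs F j))
            + (SS cs F (m + 1) + SS cs F (n + 1 + m)) := by abel
        _ = ((m + 1) / 2) • X3 cs F + X3 cs F := by rw [hsym, ih]
    · have hm2 : m % 2 = 1 := Nat.odd_iff.mp ho
      have hne : ¬ Even m := Nat.not_even_iff_odd.mpr ho
      rw [if_neg hne] at ih
      rw [if_neg hne, if_pos (by rw [Nat.even_add_one]; exact hne), add_zero]
      rw [show (m + 1 + 1) / 2 = (m + 1) / 2 by omega]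
      exact ih

end Prod


section Final

open Classical

variable (F : Type*) [Field F] [Fintype W]

lemma p11_even (hn : 4 ≤ n) (hpar : Even n) :
    SS cs F 0 * SS cs F 0 = 2 • SS cs F 0 + (n / 2 - 1) • X3 cs F := by
  have P := SS_mul_SS cs F hn (show (0:ℕ) ≤ n + 1 by omega) 0
  simp only [zero_add, Nat.sub_zero] at P
  have T := tele_A cs F hn n
  rw [if_pos hpar] at T
  have hsym := SS_add_SS cs F hn 0
  rw [add_zero] at hsym
  have hn2 : n % 2 = 0 := Nat.even_iff.mp hpar
  obtain ⟨c, hc⟩ : ∃ c, n / 2 = c + 1 := ⟨n / 2 - 1, by omega⟩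
  rw [hc] at T
  rw [P, show n / 2 - 1 = c by omega]
  have E2 : SS cs F n = X3 cs F - SS cs F 0 := by rw [← hsym]; abel
  rw [E2] at T
  have T2 : (∑ j ∈ Finset.range n, if Even j then SS cs F j else SS cs F (n + 1 + j))
      = (c + 1) • X3 cs F + SS cs F 0 - (X3 cs F - SS cs F 0) := by
    rw [← T]; abel
  rw [T2, succ_nsmul]
  abel

lemma p11_odd (hn : 4 ≤ n) (hpar : Odd n) :
    SS cs F 0 * SS cs F 0 = SS cs F 0 + (n / 2) • X3 cs F := by
  have P := SS_mul_SS cs F hn (show (0:ℕ) ≤ n + 1 by omega) 0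
  simp only [zero_add, Nat.sub_zero] at P
  have T := tele_A cs F hn n
  rw [if_neg (Nat.not_even_iff_odd.mpr hpar), add_zero] at T
  rw [P, T]
  abel

lemma p12_even (hn : 4 ≤ n) (hpar : Even n) :
    SS cs F 0 * SS cs F (n + 1) = (n / 2) • X3 cs F := by
  have hn2 : n % 2 = 0 := Nat.even_iff.mp hpar
  have P := SS_mul_SS cs F hn (show (0:ℕ) ≤ n + 1 by omega) (n + 1)
  simp only [zero_add, Nat.sub_zero] at P
  have hstep : ∀ j ∈ Finset.range n,
      (if Even (n + 1 + j) then SS cs F (n + 1 + j) else SS cs F (n + 1 + (n + 1 + j)))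
      = (if Even j then SS cs F (j + 2) else SS cs F (n + 1 + j)) := by
    intro j _
    rcases Nat.even_or_odd j with hj | hj
    · have hj2 : j % 2 = 0 := Nat.even_iff.mp hj
      rw [if_neg (by rw [Nat.even_iff]; omega), if_pos hj,
        show n + 1 + (n + 1 + j) = (j + 2) + 2 * n by omega, SS_period cs F hn]
    · have hj2 : j % 2 = 1 := Nat.odd_iff.mp hj
      rw [if_pos (by rw [Nat.even_iff]; omega), if_neg (Nat.not_even_iff_odd.mpr hj)]
  rw [Finset.sum_congr rfl hstep] at P
  have T := tele_B cs F hn n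
  rw [if_pos hpar, add_zero] at T
  rw [P, T]

lemma p12_odd (hn : 4 ≤ n) (hpar : Odd n) :
    SS cs F 0 * SS cs F (n + 1) = SS cs F (n + 1) + (n / 2) • X3 cs F := by
  have hn2 : n % 2 = 1 := Nat.odd_iff.mp hpar
  have P := SS_mul_SS cs F hn (show (0:ℕ) ≤ n + 1 by omega) (n + 1)
  simp only [zero_add, Nat.sub_zero] at P
  have hstep : ∀ j ∈ Finset.range n,
      (if Even (n + 1 + j) then SS cs F (n + 1 + j) else SS cs F (n + 1 + (n + 1 + j)))
      = (if Even j then SS cs F (n + 1 + j) else SS cs F (j + 2)) := by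
    intro j _
    rcases Nat.even_or_odd j with hj | hj
    · have hj2 : j % 2 = 0 := Nat.even_iff.mp hj
      rw [if_pos (by rw [Nat.even_iff]; omega), if_pos hj]
    · have hj2 : j % 2 = 1 := Nat.odd_iff.mp hj
      rw [if_neg (by rw [Nat.even_iff]; omega), if_neg (Nat.not_even_iff_odd.mpr hj),
        show n + 1 + (n + 1 + j) = (j + 2) + 2 * n by omega, SS_period cs F hn]
  rw [Finset.sum_congr rfl hstep] at P
  have T := tele_C cs F hn n
  rw [if_neg (Nat.not_even_iff_odd.mpr hpar), add_zero,
    show (n + 1) / 2 = n / 2 + 1 by omega, succ_nsmul] at T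
  have hsym := SS_add_SS cs F hn 1
  rw [show n + 1 = n + 1 from rfl] at hsym
  have E2 : SS cs F 1 = X3 cs F - SS cs F (n + 1) := by rw [← hsym]; abel
  rw [E2] at T
  have T2 : (∑ j ∈ Finset.range n, if Even j then SS cs F (n + 1 + j) else SS cs F (j + 2))
      = (n / 2) • X3 cs F + X3 cs F - (X3 cs F - SS cs F (n + 1)) := by
    rw [← T]; abel
  rw [P, T2]
  abel

lemma p21_even (hn : 4 ≤ n) (hpar : Even n) :
    SS cs F (n + 1) * SS cs F 0 = (n / 2) • X3 cs F := by
  have hn2 : n % 2 = 0 := Nat.even_iff.mp hpar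
  have P := SS_mul_SS cs F hn (le_refl (n + 1)) 0
  simp only [zero_add, Nat.sub_self] at P
  have T := tele_D cs F hn n
  rw [if_pos hpar, add_zero, show (n + 1) / 2 = n / 2 by omega] at T
  rw [P, T]

lemma p21_odd (hn : 4 ≤ n) (hpar : Odd n) :
    SS cs F (n + 1) * SS cs F 0 = SS cs F 0 + (n / 2) • X3 cs F := by
  have hn2 : n % 2 = 1 := Nat.odd_iff.mp hpar
  have P := SS_mul_SS cs F hn (le_refl (n + 1)) 0
  simp only [zero_add, Nat.sub_self] at P
  have T := tele_D cs F hn n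
  rw [if_neg (Nat.not_even_iff_odd.mpr hpar),
    show (n + 1) / 2 = n / 2 + 1 by omega, succ_nsmul] at T
  have hsym := SS_add_SS cs F hn 0
  rw [add_zero] at hsym
  have E2 : SS cs F n = X3 cs F - SS cs F 0 := by rw [← hsym]; abel
  rw [E2] at T
  have T2 : (∑ j ∈ Finset.range n, if Even j then SS cs F (n + 1 + j) else SS cs F j)
      = (n / 2) • X3 cs F + X3 cs F - (X3 cs F - SS cs F 0) := by
    rw [← T]; abel
  rw [P, T2]
  abel

lemma p22_even (hn : 4 ≤ n) (hpar : Even n) :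
    SS cs F (n + 1) * SS cs F (n + 1) = 2 • SS cs F (n + 1) + (n / 2 - 1) • X3 cs F := by
  have hn2 : n % 2 = 0 := Nat.even_iff.mp hpar
  have P := SS_mul_SS cs F hn (le_refl (n + 1)) (n + 1)
  simp only [Nat.sub_self, zero_add] at P
  have hstep : ∀ j ∈ Finset.range n,
      (if Even (n + 1 + j) then SS cs F (n + 1 + (n + 1 + j)) else SS cs F (n + 1 + j))
      = (if Even j then SS cs F (n + 1 + j) else SS cs F (j + 2)) := by
    intro j _
    rcases Nat.even_or_odd j with hj | hj
    · have hj2 : j % 2 = 0 := Nat.even_iff.mp hj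
      rw [if_neg (by rw [Nat.even_iff]; omega), if_pos hj]
    · have hj2 : j % 2 = 1 := Nat.odd_iff.mp hj
      rw [if_pos (by rw [Nat.even_iff]; omega), if_neg (Nat.not_even_iff_odd.mpr hj),
        show n + 1 + (n + 1 + j) = (j + 2) + 2 * n by omega, SS_period cs F hn]
  rw [Finset.sum_congr rfl hstep] at P
  have T := tele_C cs F hn n
  rw [if_pos hpar, show (n + 1) / 2 = n / 2 by omega] at T
  have hsym := SS_add_SS cs F hn 1
  have E2 : SS cs F 1 = X3 cs F - SS cs F (n + 1) := by rw [← hsym]; abel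
  rw [E2] at T
  obtain ⟨c, hc⟩ : ∃ c, n / 2 = c + 1 := ⟨n / 2 - 1, by omega⟩
  rw [hc, succ_nsmul] at T
  rw [P, show n / 2 - 1 = c by omega]
  have T2 : (∑ j ∈ Finset.range n, if Even j then SS cs F (n + 1 + j) else SS cs F (j + 2))
      = (c • X3 cs F + X3 cs F) + SS cs F (n + 1) - (X3 cs F - SS cs F (n + 1)) := by
    rw [← T]; abel
  rw [T2]
  abel

lemma p22_odd (hn : 4 ≤ n) (hpar : Odd n) :
    SS cs F (n + 1) * SS cs F (n + 1) = SS cs F (n + 1) + (n / 2) • X3 cs F := by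
  have hn2 : n % 2 = 1 := Nat.odd_iff.mp hpar
  have P := SS_mul_SS cs F hn (le_refl (n + 1)) (n + 1)
  simp only [Nat.sub_self, zero_add] at P
  have hstep : ∀ j ∈ Finset.range n,
      (if Even (n + 1 + j) then SS cs F (n + 1 + (n + 1 + j)) else SS cs F (n + 1 + j))
      = (if Even j then SS cs F (j + 2) else SS cs F (n + 1 + j)) := by
    intro j _
    rcases Nat.even_or_odd j with hj | hj
    · have hj2 : j % 2 = 0 := Nat.even_iff.mp hj
      rw [if_pos (by rw [Nat.even_iff]; omega), if_pos hj,
        show n + 1 + (n + 1 + j) = (j + 2) + 2 * n by omega, SS_period cs F hn]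
    · have hj2 : j % 2 = 1 := Nat.odd_iff.mp hj
      rw [if_neg (by rw [Nat.even_iff]; omega), if_neg (Nat.not_even_iff_odd.mpr hj)]
  rw [Finset.sum_congr rfl hstep] at P
  have T := tele_B cs F hn n
  rw [if_neg (Nat.not_even_iff_odd.mpr hpar)] at T
  rw [P, T]
  abel

end Final

end StmtAux

/-- The multiplication table of the descent algebra of the dihedral Coxeter group of type
`I₂(n)`, with `x₁ = x_{{0}}`, `x₂ = x_{{1}}`, `x₃ = x_∅`, `ℓ = ⌊n/2⌋` and
`ε = 1` if `n` is even, `ε = 0` otherwise. -/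
theorem stmt_4 (F : Type*) [Field F] (n : ℕ) (hn : 4 ≤ n)
    (W : Type*) [Group W] [Fintype W]
    (cs : CoxeterSystem (CoxeterMatrix.I (n - 2)) W)
    (x₁ x₂ x₃ : MonoidAlgebra F W)
    (hx₁ : x₁ = descentElt F cs ({0} : Set (Fin 2)))
    (hx₂ : x₂ = descentElt F cs ({1} : Set (Fin 2)))
    (hx₃ : x₃ = descentElt F cs (∅ : Set (Fin 2)))
    (l e : ℕ) (hl : l = n / 2) (he : e = if Even n then 1 else 0) :
    x₁ * x₁ = ((1 + e : ℕ) : F) • x₁ + ((l - e : ℕ) : F) • x₃ ∧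
    x₁ * x₂ = ((1 - e : ℕ) : F) • x₂ + (l : F) • x₃ ∧
    x₂ * x₁ = ((1 - e : ℕ) : F) • x₁ + (l : F) • x₃ ∧
    x₂ * x₂ = ((1 + e : ℕ) : F) • x₂ + ((l - e : ℕ) : F) • x₃ ∧
    x₁ * x₃ = (n : F) • x₃ ∧
    x₃ * x₁ = (n : F) • x₃ ∧
    x₂ * x₃ = (n : F) • x₃ ∧
    x₃ * x₂ = (n : F) • x₃ ∧
    x₃ * x₃ = ((2 * n : ℕ) : F) • x₃ := by
  subst hx₁ hx₂ hx₃ hl he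
  rw [StmtAux.x1_eq cs F hn, StmtAux.x2_eq cs F hn, StmtAux.x3_eq cs F hn]
  refine ⟨?_, ?_, ?_, ?_, ?_, ?_, ?_, ?_, ?_⟩
  · rcases Nat.even_or_odd n with hpar | hpar
    · have hn2 : n % 2 = 0 := Nat.even_iff.mp hpar
      rw [if_pos hpar, Nat.cast_smul_eq_nsmul, Nat.cast_smul_eq_nsmul,
        StmtAux.p11_even cs F hn hpar]
      skip
    · rw [if_neg (Nat.not_even_iff_odd.mpr hpar), Nat.cast_smul_eq_nsmul,
        Nat.cast_smul_eq_nsmul, StmtAux.p11_odd cs F hn hpar]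
      norm_num
  · rcases Nat.even_or_odd n with hpar | hpar
    · rw [if_pos hpar, Nat.cast_smul_eq_nsmul, Nat.cast_smul_eq_nsmul,
        StmtAux.p12_even cs F hn hpar]
      norm_num
    · rw [if_neg (Nat.not_even_iff_odd.mpr hpar), Nat.cast_smul_eq_nsmul,
        Nat.cast_smul_eq_nsmul, StmtAux.p12_odd cs F hn hpar]
      norm_num
  · rcases Nat.even_or_odd n with hpar | hpar
    · rw [if_pos hpar, Nat.cast_smul_eq_nsmul, Nat.cast_smul_eq_nsmul,
        StmtAux.p21_even cs F hn hpar]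
      norm_num
    · rw [if_neg (Nat.not_even_iff_odd.mpr hpar), Nat.cast_smul_eq_nsmul,
        Nat.cast_smul_eq_nsmul, StmtAux.p21_odd cs F hn hpar]
      norm_num
  · rcases Nat.even_or_odd n with hpar | hpar
    · rw [if_pos hpar, Nat.cast_smul_eq_nsmul, Nat.cast_smul_eq_nsmul,
        StmtAux.p22_even cs F hn hpar]
      skip
    · rw [if_neg (Nat.not_even_iff_odd.mpr hpar), Nat.cast_smul_eq_nsmul,
        Nat.cast_smul_eq_nsmul, StmtAux.p22_odd cs F hn hpar]
      norm_num
  · rw [Nat.cast_smul_eq_nsmul]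
    exact StmtAux.SS_mul_X3 cs F hn 0
  · rw [Nat.cast_smul_eq_nsmul]
    exact StmtAux.X3_mul_SS cs F hn 0
  · rw [Nat.cast_smul_eq_nsmul]
    exact StmtAux.SS_mul_X3 cs F hn (n + 1)
  · rw [Nat.cast_smul_eq_nsmul]
    exact StmtAux.X3_mul_SS cs F hn (n + 1)
  · rw [Nat.cast_smul_eq_nsmul]
    exact StmtAux.X3_mul_X3 cs F hn
end

section
/- Suppose n is even, the characteristic of F is not 2, and n·1_F = 0 in F (so char F is an odd prime dividing n). Set e_U = 2⁻¹·x₁ − 4⁻¹·x₃, e_V = 2⁻¹·x₂ − 4⁻¹·x₃, and e_Z = 1 − e_U − e_V, all elements of F[W]. Then e_U² = e_U, e_V² = e_V, e_U·e_V = 0 = e_V·e_U, e_U·e_Z = e_Z·e_U = 0, e_V·e_Z = e_Z·e_V = 0, and e_Z·x₃·e_Z = x₃. -/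
namespace Stmt6Aux

open CoxeterSystem Finset List
open scoped Classical

set_option linter.unusedSectionVars false
variable {n : ℕ} {W : Type*} [Group W] [Fintype W]
variable (cs : CoxeterSystem (CoxeterMatrix.I (n - 2)) W)

theorem Mne (hn : 4 ≤ n) {i i' : Fin 2} (h : i ≠ i') : (CoxeterMatrix.I (n - 2)) i i' = n := by
  simp only [CoxeterMatrix.I, Matrix.of_apply, if_neg h]
  omega

theorem Mne' (hn : 4 ≤ n) {i i' : Fin 2} (h : i ≠ i') :
    (CoxeterMatrix.I (n - 2)).M i i' = n := Mne hn h

theorem chain'_of_isReduced : ∀ {ω : List (Fin 2)}, cs.IsReduced ω → List.IsChain (· ≠ ·) ω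
  | [], _ => List.isChain_nil
  | [_], _ => by simp
  | (a :: b :: t), hω => by
    rw [List.isChain_cons_cons]
    constructor
    · rintro rfl
      have h1 : cs.wordProd (a :: a :: t) = cs.wordProd t := by
        rw [cs.wordProd_cons, cs.wordProd_cons, cs.simple_mul_simple_cancel_left]
      unfold CoxeterSystem.IsReduced at hω
      rw [h1] at hω
      have := cs.length_wordProd_le t
      simp [List.length_cons] at hω
      omega
    · exact chain'_of_isReduced (hω.drop 1)

theorem eq_alternatingWord : ∀ {ω : List (Fin 2)}, List.IsChain (· ≠ ·) ω →
    ∃ i i' : Fin 2, i ≠ i' ∧ ω = alternatingWord i i' ω.length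
  | [], _ => ⟨0, 1, by decide, rfl⟩
  | [j], _ => by
    refine ⟨j + 1, j, by omega, ?_⟩
    rw [show ([j] : List (Fin 2)).length = 0 + 1 from rfl, alternatingWord_succ]
    rfl
  | (j :: c :: t), hω => by
    obtain ⟨hjc, hch⟩ := List.isChain_cons_cons.mp hω
    obtain ⟨i, i', hii, he⟩ := eq_alternatingWord hch
    rw [List.length_cons]
    set m := (c :: t).length with hm
    have hm1 : 1 ≤ m := by simp [hm]
    -- head of alternatingWord i i' m is (if Even (m-1) then i' else i)
    have hhead : c = (if Even (m - 1) then i' else i) := by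
      have h2 : alternatingWord i i' m = (if Even (m-1) then i' else i) :: alternatingWord i i' (m-1) := by
        conv_lhs => rw [show m = (m - 1) + 1 by omega, alternatingWord_succ']
      rw [h2] at he
      exact (List.cons_eq_cons.mp he).1
    have fin2 : ∀ (j i i' : Fin 2), i ≠ i' → j ≠ i → j = i' := by decide
    have hpar : Even (m - 1) ↔ ¬ Even m := by
      rw [Nat.even_sub hm1]; simp
    have hj : j = (if Even m then i' else i) := by
      by_cases hp : Even m
      · rw [if_neg (by rw [hpar]; exact not_not_intro hp)] at hhead
        rw [if_pos hp]
        exact fin2 j i i' hii (hhead ▸ hjc)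
      · rw [if_pos (hpar.mpr hp)] at hhead
        rw [if_neg hp]
        exact fin2 j i' i (Ne.symm hii) (hhead ▸ hjc)
    refine ⟨i, i', hii, ?_⟩
    rw [alternatingWord_succ', ← hj, ← he]

theorem length_le (hn : 4 ≤ n) (w : W) : cs.length w ≤ n := by
  by_contra hlt
  push_neg at hlt
  obtain ⟨ω, hω, hw⟩ := cs.exists_reduced_word w
  have hω : ω.length = cs.length w := by rw [hw]; exact hω.eq.symm
  have hred : cs.IsReduced ω := by unfold CoxeterSystem.IsReduced; rw [← hw, hω]
  obtain ⟨i, i', hii, he⟩ := eq_alternatingWord (chain'_of_isReduced cs hred)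
  rw [he, hω] at hred
  exact cs.not_isReduced_alternatingWord i i'
    (by rw [Mne' hn hii]; omega) (by rw [Mne' hn hii]; omega) hred


theorem Mdiag : ∀ i : Fin 2, (CoxeterMatrix.I (n - 2)).M i i = 1 := by
  intro i
  show (CoxeterMatrix.I (n - 2)) i i = 1
  simp [CoxeterMatrix.I]

theorem liftable (hn : 4 ≤ n) :
    CoxeterMatrix.IsLiftable (CoxeterMatrix.I (n - 2))
      (fun i : Fin 2 => (DihedralGroup.sr (if i = 0 then 0 else 1) : DihedralGroup n)) := by
  have : NeZero n := ⟨by omega⟩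
  intro i i'
  by_cases h : i = i'
  · subst h
    rw [show ((CoxeterMatrix.I (n-2)) i i) = 1 from Mdiag i, pow_one,
      DihedralGroup.sr_mul_self]
  · rw [show ((CoxeterMatrix.I (n-2)) i i') = n from Mne' hn h, DihedralGroup.sr_mul_sr]
    rw [← orderOf_dvd_iff_pow_eq_one, DihedralGroup.orderOf_r]
    exact Nat.div_dvd_of_dvd (Nat.gcd_dvd_left _ _)

/-- The homomorphism to the dihedral group. -/
noncomputable def toDih (hn : 4 ≤ n) : W →* DihedralGroup n :=
  cs.lift ⟨_, liftable hn⟩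

theorem toDih_simple (hn : 4 ≤ n) (i : Fin 2) :
    toDih cs hn (cs.simple i) = DihedralGroup.sr (if i = 0 then 0 else 1) :=
  cs.lift_apply_simple (liftable hn) i

theorem toDih_surj (hn : 4 ≤ n) : Function.Surjective (toDih cs hn) := by
  have : NeZero n := ⟨by omega⟩
  have hz : toDih cs hn (cs.simple 0 * cs.simple 1) = DihedralGroup.r 1 := by
    rw [map_mul, toDih_simple, toDih_simple]
    simp
  intro x
  cases x with
  | r k =>
      refine ⟨(cs.simple 0 * cs.simple 1) ^ k.val, ?_⟩
      rw [map_pow, hz, DihedralGroup.r_one_pow, ZMod.natCast_val, ZMod.cast_id]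
  | sr k =>
      refine ⟨(cs.simple 0 * cs.simple 1) ^ (-k : ZMod n).val * cs.simple 0, ?_⟩
      rw [map_mul, map_pow, hz, DihedralGroup.r_one_pow, toDih_simple]
      simp [ZMod.natCast_val, ZMod.cast_id]

include cs in
theorem card_ge (hn : 4 ≤ n) : 2 * n ≤ Fintype.card W := by
  have : NeZero n := ⟨by omega⟩
  have := Fintype.card_le_of_surjective _ (toDih_surj cs hn)
  rwa [DihedralGroup.card] at this


section Counting

/-- `pw i i' m` = product of the alternating word. -/
noncomputable def pw (i i' : Fin 2) (m : ℕ) : W := cs.wordProd (alternatingWord i i' m)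

theorem length_pw_le (i i' : Fin 2) (m : ℕ) : cs.length (pw cs i i' m) ≤ m := by
  have := cs.length_wordProd_le (alternatingWord i i' m)
  rwa [length_alternatingWord] at this

theorem pw_zero (i i' : Fin 2) : pw cs i i' 0 = 1 := by
  simp [pw, alternatingWord]

theorem pw_braid (hn : 4 ≤ n) : pw cs 0 1 n = pw cs 1 0 n := by
  have h := cs.wordProd_braidWord_eq 0 1
  unfold CoxeterSystem.braidWord at h
  rwa [Mne' hn (by decide : (0 : Fin 2) ≠ 1), Mne' hn (by decide : (1 : Fin 2) ≠ 0)] at h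

theorem fin2cases : ∀ i i' : Fin 2, i ≠ i' → (i = 0 ∧ i' = 1) ∨ (i = 1 ∧ i' = 0) := by decide

theorem mem_enum (w : W) :
    w = pw cs 0 1 (cs.length w) ∨ w = pw cs 1 0 (cs.length w) := by
  obtain ⟨ω, hω, hw⟩ := cs.exists_reduced_word w
  have hω : ω.length = cs.length w := by rw [hw]; exact hω.eq.symm
  have hred : cs.IsReduced ω := by unfold CoxeterSystem.IsReduced; rw [← hw, hω]
  obtain ⟨i, i', hii, he⟩ := eq_alternatingWord (chain'_of_isReduced cs hred)
  rcases fin2cases i i' hii with ⟨rfl, rfl⟩ | ⟨rfl, rfl⟩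
  · left
    conv_lhs => rw [hw, he]
    rw [hω, pw]
  · right
    conv_lhs => rw [hw, he]
    rw [hω, pw]

/-- The two image finsets. -/
noncomputable def FA : Finset W := (Finset.range (n+1)).image (pw cs 0 1)

noncomputable def FB : Finset W := (Finset.Ico 1 n).image (pw cs 1 0)

theorem mem_FA {w : W} : w ∈ FA cs ↔ ∃ m, m ≤ n ∧ pw cs 0 1 m = w := by
  unfold FA
  rw [Finset.mem_image]
  simp only [Finset.mem_range]
  constructor
  · rintro ⟨m, hm, rfl⟩; exact ⟨m, by omega, rfl⟩
  · rintro ⟨m, hm, rfl⟩; exact ⟨m, by omega, rfl⟩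

theorem mem_FB {w : W} : w ∈ FB cs ↔ ∃ m, 1 ≤ m ∧ m < n ∧ pw cs 1 0 m = w := by
  unfold FB
  rw [Finset.mem_image]
  simp only [Finset.mem_Ico]
  constructor
  · rintro ⟨m, hm, rfl⟩; exact ⟨m, hm.1, hm.2, rfl⟩
  · rintro ⟨m, h1, h2, rfl⟩; exact ⟨m, ⟨h1, h2⟩, rfl⟩

theorem cover (hn : 4 ≤ n) : (Finset.univ : Finset W) ⊆ FA cs ∪ FB cs := by
  intro w _
  rw [Finset.mem_union, mem_FA, mem_FB]
  have hle := length_le cs hn w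
  rcases mem_enum cs w with hw | hw
  · exact Or.inl ⟨cs.length w, hle, hw.symm⟩
  · rcases Nat.eq_zero_or_pos (cs.length w) with h0 | h1
    · refine Or.inl ⟨0, by omega, ?_⟩
      rw [pw_zero cs 0 1]
      rw [h0, pw_zero cs 1 0] at hw
      exact hw.symm
    · rcases eq_or_lt_of_le hle with hn' | hn'
      · refine Or.inl ⟨n, le_rfl, ?_⟩
        rw [hn'] at hw
        rw [pw_braid cs hn]
        exact hw.symm
      · exact Or.inr ⟨cs.length w, h1, hn', hw.symm⟩

theorem cards (hn : 4 ≤ n) :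
    (FA cs : Finset W).card = n + 1 ∧ (FB cs : Finset W).card = n - 1 ∧
      Disjoint (FA cs) (FB cs) := by
  have hAle : (FA cs).card ≤ n + 1 := le_trans (Finset.card_image_le) (by simp)
  have hBle : (FB cs).card ≤ n - 1 := le_trans (Finset.card_image_le) (by simp)
  have hcard : 2 * n ≤ ((FA cs) ∪ (FB cs)).card :=
    le_trans (card_ge cs hn) (le_trans (le_of_eq (Finset.card_univ).symm)
      (Finset.card_le_card (cover cs hn)))
  have hunion := Finset.card_union_add_card_inter (FA cs) (FB cs)
  have hUle : ((FA cs) ∪ (FB cs)).card ≤ (FA cs).card + (FB cs).card :=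
    Finset.card_union_le _ _
  have hA : (FA cs).card = n + 1 := by omega
  have hB : (FB cs).card = n - 1 := by omega
  refine ⟨hA, hB, ?_⟩
  rw [Finset.disjoint_iff_inter_eq_empty, ← Finset.card_eq_zero]
  omega

theorem not_mem_both (hn : 4 ≤ n) {w : W} (hA : w ∈ FA cs) (hB : w ∈ FB cs) : False := by
  have := (cards cs hn).2.2
  rw [Finset.disjoint_iff_inter_eq_empty] at this
  have : w ∈ (FA cs ∩ FB cs) := Finset.mem_inter.mpr ⟨hA, hB⟩
  simp_all

theorem pw_injOn (hn : 4 ≤ n) {m₁ m₂ : ℕ} (h1 : m₁ ≤ n) (h2 : m₂ ≤ n)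
    (h : pw cs 0 1 m₁ = pw cs 0 1 m₂) : m₁ = m₂ := by
  have hinj : Set.InjOn (pw cs 0 1) ((Finset.range (n+1) : Finset ℕ) : Set ℕ) := by
    rw [← Finset.card_image_iff]
    have : Finset.image (pw cs 0 1) (Finset.range (n+1)) = FA cs := by
      unfold FA; congr 1
    rw [this, (cards cs hn).1, Finset.card_range]
  exact hinj (by simp; omega) (by simp; omega) h

theorem qw_injOn (hn : 4 ≤ n) {m₁ m₂ : ℕ} (h1a : 1 ≤ m₁) (h1 : m₁ < n) (h2a : 1 ≤ m₂)
    (h2 : m₂ < n) (h : pw cs 1 0 m₁ = pw cs 1 0 m₂) : m₁ = m₂ := by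
  have hinj : Set.InjOn (pw cs 1 0) ((Finset.Ico 1 n : Finset ℕ) : Set ℕ) := by
    rw [← Finset.card_image_iff]
    have : Finset.image (pw cs 1 0) (Finset.Ico 1 n) = FB cs := by
      unfold FB; congr 1
    rw [this, (cards cs hn).2.1, Nat.card_Ico]
  exact hinj (by simp; omega) (by simp; omega) h

theorem length_pw (hn : 4 ≤ n) (m : ℕ) (hm : m ≤ n) : cs.length (pw cs 0 1 m) = m := by
  set w := pw cs 0 1 m with hwdef
  have hl1 : cs.length w ≤ m := length_pw_le cs 0 1 m
  have hmemA : w ∈ FA cs := (mem_FA cs).mpr ⟨m, hm, rfl⟩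
  rcases mem_enum cs w with hw | hw
  · exact (pw_injOn cs hn hm (by omega) (hwdef.symm.trans hw)).symm
  · rcases Nat.eq_zero_or_pos (cs.length w) with h0 | h1
    · have h2 : w = pw cs 0 1 0 := by rw [pw_zero cs 0 1, hw, h0, pw_zero cs 1 0]
      have := pw_injOn cs hn hm (by omega) (hwdef.symm.trans h2)
      omega
    · rcases eq_or_lt_of_le (length_le cs hn w) with he | hlt
      · rw [he] at hw
        have h2 : w = pw cs 0 1 n := by rw [pw_braid cs hn]; exact hw
        have := pw_injOn cs hn hm le_rfl (hwdef.symm.trans h2)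
        omega
      · exact absurd ((mem_FB cs).mpr ⟨cs.length w, h1, hlt, hw.symm⟩)
          (fun hB => not_mem_both cs hn hmemA hB)

theorem length_qw (hn : 4 ≤ n) (m : ℕ) (hm : m ≤ n) : cs.length (pw cs 1 0 m) = m := by
  rcases Nat.eq_zero_or_pos m with rfl | h1
  · rw [pw_zero cs 1 0]; simp
  rcases eq_or_lt_of_le hm with rfl | hlt
  · rw [← pw_braid cs hn]; exact length_pw cs hn m le_rfl
  set w := pw cs 1 0 m with hwdef
  have hmemB : w ∈ FB cs := (mem_FB cs).mpr ⟨m, h1, hlt, rfl⟩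
  have hnotA : w ∉ FA cs := fun hA => not_mem_both cs hn hA hmemB
  rcases mem_enum cs w with hw | hw
  · exact absurd ((mem_FA cs).mpr ⟨cs.length w, length_le cs hn w, hw.symm⟩) hnotA
  · rcases Nat.eq_zero_or_pos (cs.length w) with h0 | hp1
    · exfalso
      apply hnotA
      refine (mem_FA cs).mpr ⟨0, by omega, ?_⟩
      rw [pw_zero cs 0 1, hw, h0, pw_zero cs 1 0]
    · rcases eq_or_lt_of_le (length_le cs hn w) with he | hlt'
      · exfalso
        apply hnotA
        refine (mem_FA cs).mpr ⟨n, le_rfl, ?_⟩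
        rw [he] at hw
        rw [pw_braid cs hn]; exact hw.symm
      · exact (qw_injOn cs hn h1 hlt hp1 hlt' (hwdef.symm.trans hw)).symm

end Counting


section Descents

theorem pw_mul_s0 (m : ℕ) : pw cs 0 1 m * cs.simple 0 = pw cs 1 0 (m+1) := by
  rw [pw, pw, alternatingWord_succ 1 0 m, cs.wordProd_concat]

theorem qw_mul_s1 (m : ℕ) : pw cs 1 0 m * cs.simple 1 = pw cs 0 1 (m+1) := by
  rw [pw, pw, alternatingWord_succ 0 1 m, cs.wordProd_concat]

theorem dp (hn : 4 ≤ n) (m : ℕ) (hm : m < n) :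
    cs.length (pw cs 0 1 m) < cs.length (pw cs 0 1 m * cs.simple 0) := by
  rw [pw_mul_s0, length_pw cs hn m (by omega), length_qw cs hn (m+1) (by omega)]
  omega

theorem dq (hn : 4 ≤ n) (m : ℕ) (hm : m < n) :
    cs.length (pw cs 1 0 m) < cs.length (pw cs 1 0 m * cs.simple 1) := by
  rw [qw_mul_s1, length_qw cs hn m (by omega), length_pw cs hn (m+1) (by omega)]
  omega

theorem np (hn : 4 ≤ n) (m : ℕ) (h1 : 1 ≤ m) (hm : m ≤ n) :
    cs.length (pw cs 0 1 m * cs.simple 1) < cs.length (pw cs 0 1 m) := by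
  have he : pw cs 0 1 m = pw cs 1 0 (m-1) * cs.simple 1 := by
    rw [qw_mul_s1]; congr 1; omega
  rw [he, cs.simple_mul_simple_cancel_right]
  exact dq cs hn (m-1) (by omega)

theorem nq (hn : 4 ≤ n) (m : ℕ) (h1 : 1 ≤ m) (hm : m ≤ n) :
    cs.length (pw cs 1 0 m * cs.simple 0) < cs.length (pw cs 1 0 m) := by
  have he : pw cs 1 0 m = pw cs 0 1 (m-1) * cs.simple 0 := by
    rw [pw_mul_s0]; congr 1; omega
  rw [he, cs.simple_mul_simple_cancel_right]
  exact dp cs hn (m-1) (by omega)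

end Descents

section Sums

variable (F : Type*) [Field F]

local notation "of" => MonoidAlgebra.of F W

theorem sum_ite_eq_filter (p : W → Prop) :
    (∑ w : W, if p w then (of w : MonoidAlgebra F W) else 0)
      = ∑ w ∈ Finset.univ.filter p, of w :=
  (Finset.sum_filter _ _).symm

theorem filterP (hn : 4 ≤ n) :
    Finset.univ.filter (fun w : W => cs.length w < cs.length (w * cs.simple 0))
      = (Finset.range n).image (pw cs 0 1) := by
  ext w
  rw [Finset.mem_filter, Finset.mem_image]
  simp only [Finset.mem_univ, true_and, Finset.mem_range]
  constructor
  · intro hdesc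
    rcases mem_enum cs w with hw | hw
    · refine ⟨cs.length w, ?_, hw.symm⟩
      rcases eq_or_lt_of_le (length_le cs hn w) with he | hlt
      · exfalso
        rw [he, pw_braid cs hn] at hw
        rw [hw] at hdesc
        exact absurd hdesc (by have := nq cs hn n (by omega) le_rfl; omega)
      · exact hlt
    · rcases Nat.eq_zero_or_pos (cs.length w) with h0 | h1
      · refine ⟨0, by omega, ?_⟩
        rw [pw_zero cs 0 1]
        rw [h0, pw_zero cs 1 0] at hw
        exact hw.symm
      · exfalso
        rw [hw] at hdesc
        exact absurd hdesc (by have := nq cs hn _ h1 (length_le cs hn w); omega)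
  · rintro ⟨m, hm, rfl⟩
    exact dp cs hn m hm

theorem filterQ (hn : 4 ≤ n) :
    Finset.univ.filter (fun w : W => cs.length w < cs.length (w * cs.simple 1))
      = (Finset.range n).image (pw cs 1 0) := by
  ext w
  rw [Finset.mem_filter, Finset.mem_image]
  simp only [Finset.mem_univ, true_and, Finset.mem_range]
  constructor
  · intro hdesc
    rcases mem_enum cs w with hw | hw
    · rcases Nat.eq_zero_or_pos (cs.length w) with h0 | h1
      · refine ⟨0, by omega, ?_⟩
        rw [pw_zero cs 1 0]
        rw [h0, pw_zero cs 0 1] at hw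
        exact hw.symm
      · exfalso
        rw [hw] at hdesc
        exact absurd hdesc (by have := np cs hn _ h1 (length_le cs hn w); omega)
    · refine ⟨cs.length w, ?_, hw.symm⟩
      rcases eq_or_lt_of_le (length_le cs hn w) with he | hlt
      · exfalso
        rw [he, ← pw_braid cs hn] at hw
        rw [hw] at hdesc
        exact absurd hdesc (by have := np cs hn n (by omega) le_rfl; omega)
      · exact hlt
  · rintro ⟨m, hm, rfl⟩
    exact dq cs hn m hm

theorem x1_sum (hn : 4 ≤ n) :
    descentElt F cs ({0} : Set (Fin 2)) = ∑ m ∈ Finset.range n, of (pw cs 0 1 m) := by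
  unfold descentElt
  have hcond : ∀ w : W, (∀ i ∈ ({0} : Set (Fin 2)), cs.length w < cs.length (w * cs.simple i))
      ↔ cs.length w < cs.length (w * cs.simple 0) := by
    intro w
    constructor
    · intro h; exact h 0 rfl
    · intro h i hi; rw [Set.mem_singleton_iff] at hi; rw [hi]; exact h
  trans (∑ w : W, if cs.length w < cs.length (w * cs.simple 0)
      then (of w : MonoidAlgebra F W) else 0)
  · refine Finset.sum_congr rfl fun w _ => ?_
    congr 1
    exact propext (hcond w)
  have hsf := Finset.sum_filter (s := Finset.univ) (fun w : W => cs.length w < cs.length (w * cs.simple 0))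
    (fun w => (of w : MonoidAlgebra F W))
  rw [← hsf, filterP cs hn]
  refine Finset.sum_image ?_
  intro x hx y hy hxy
  simp only [Finset.mem_coe, Finset.mem_range] at hx hy
  have h := congrArg cs.length hxy
  rwa [length_pw cs hn x (by omega), length_pw cs hn y (by omega)] at h

theorem x2_sum (hn : 4 ≤ n) :
    descentElt F cs ({1} : Set (Fin 2)) = ∑ m ∈ Finset.range n, of (pw cs 1 0 m) := by
  unfold descentElt
  have hcond : ∀ w : W, (∀ i ∈ ({1} : Set (Fin 2)), cs.length w < cs.length (w * cs.simple i))
      ↔ cs.length w < cs.length (w * cs.simple 1) := by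
    intro w
    constructor
    · intro h; exact h 1 rfl
    · intro h i hi; rw [Set.mem_singleton_iff] at hi; rw [hi]; exact h
  trans (∑ w : W, if cs.length w < cs.length (w * cs.simple 1)
      then (of w : MonoidAlgebra F W) else 0)
  · refine Finset.sum_congr rfl fun w _ => ?_
    congr 1
    exact propext (hcond w)
  have hsf := Finset.sum_filter (s := Finset.univ) (fun w : W => cs.length w < cs.length (w * cs.simple 1))
    (fun w => (of w : MonoidAlgebra F W))
  rw [← hsf, filterQ cs hn]
  refine Finset.sum_image ?_
  intro x hx y hy hxy
  simp only [Finset.mem_coe, Finset.mem_range] at hx hy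
  have h := congrArg cs.length hxy
  rwa [length_qw cs hn x (by omega), length_qw cs hn y (by omega)] at h

theorem x3_sum :
    descentElt F cs (∅ : Set (Fin 2)) = ∑ w : W, of w := by
  unfold descentElt
  simp

end Sums


section Alg

variable (F : Type*) [Field F]

local notation "of" => MonoidAlgebra.of F W

noncomputable def aa : MonoidAlgebra F W := of (cs.simple 0 * cs.simple 1)
noncomputable def bb : MonoidAlgebra F W := of (cs.simple 1 * cs.simple 0)
noncomputable def u0 : MonoidAlgebra F W := of (cs.simple 0)
noncomputable def u1 : MonoidAlgebra F W := of (cs.simple 1)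
noncomputable def RA (m : ℕ) : MonoidAlgebra F W := ∑ k ∈ Finset.range m, aa cs F ^ k
noncomputable def RB (m : ℕ) : MonoidAlgebra F W := ∑ k ∈ Finset.range m, bb cs F ^ k

theorem ab_one : aa cs F * bb cs F = 1 := by
  rw [aa, bb, ← map_mul, ← map_one (MonoidAlgebra.of F W)]
  congr 1
  rw [mul_assoc, cs.simple_mul_simple_cancel_left, cs.simple_mul_simple_self]

theorem ba_one : bb cs F * aa cs F = 1 := by
  rw [aa, bb, ← map_mul, ← map_one (MonoidAlgebra.of F W)]
  congr 1
  rw [mul_assoc, cs.simple_mul_simple_cancel_left, cs.simple_mul_simple_self]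

theorem aa_pow (hn : 4 ≤ n) : aa cs F ^ n = 1 := by
  rw [aa, ← map_pow, ← map_one (MonoidAlgebra.of F W)]
  congr 1
  have := cs.simple_mul_simple_pow 0 1
  rwa [Mne' hn (by decide : (0 : Fin 2) ≠ 1)] at this

theorem u0_sq : u0 cs F * u0 cs F = 1 := by
  rw [u0, ← map_mul, ← map_one (MonoidAlgebra.of F W)]
  congr 1
  exact cs.simple_mul_simple_self 0

theorem u1_sq : u1 cs F * u1 cs F = 1 := by
  rw [u1, ← map_mul, ← map_one (MonoidAlgebra.of F W)]
  congr 1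
  exact cs.simple_mul_simple_self 1

theorem u0u1 : u0 cs F * u1 cs F = aa cs F := by rw [u0, u1, aa, ← map_mul]

theorem u1u0 : u1 cs F * u0 cs F = bb cs F := by rw [u1, u0, bb, ← map_mul]

theorem u1_eq : u1 cs F = u0 cs F * aa cs F := by
  rw [u0, aa, u1, ← map_mul]
  congr 1
  rw [cs.simple_mul_simple_cancel_left]

theorem u0a : u0 cs F * aa cs F = bb cs F * u0 cs F := by
  rw [u0, aa, bb, ← map_mul, ← map_mul]
  congr 1
  simp [mul_assoc, cs.simple_mul_simple_cancel_left, cs.simple_mul_simple_self]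

theorem u1a : u1 cs F * aa cs F = bb cs F * u1 cs F := by
  rw [u1, aa, bb, ← map_mul, ← map_mul]
  simp [mul_assoc]

theorem u0b : u0 cs F * bb cs F = aa cs F * u0 cs F := by
  rw [u0, aa, bb, ← map_mul, ← map_mul]
  simp [mul_assoc]

theorem u1b : u1 cs F * bb cs F = aa cs F * u1 cs F := by
  rw [u1, aa, bb, ← map_mul, ← map_mul]
  congr 1
  simp [mul_assoc, cs.simple_mul_simple_cancel_left, cs.simple_mul_simple_self]

theorem u0_apow (k : ℕ) : u0 cs F * aa cs F ^ k = bb cs F ^ k * u0 cs F := by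
  induction k with
  | zero => simp
  | succ k ih =>
      rw [pow_succ, ← mul_assoc, ih, mul_assoc, u0a, pow_succ, mul_assoc]

theorem u1_apow (k : ℕ) : u1 cs F * aa cs F ^ k = bb cs F ^ k * u1 cs F := by
  induction k with
  | zero => simp
  | succ k ih =>
      rw [pow_succ, ← mul_assoc, ih, mul_assoc, u1a, pow_succ, mul_assoc]

theorem u0_bpow (k : ℕ) : u0 cs F * bb cs F ^ k = aa cs F ^ k * u0 cs F := by
  induction k with
  | zero => simp
  | succ k ih =>
      rw [pow_succ, ← mul_assoc, ih, mul_assoc, u0b, pow_succ, mul_assoc]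

theorem u1_bpow (k : ℕ) : u1 cs F * bb cs F ^ k = aa cs F ^ k * u1 cs F := by
  induction k with
  | zero => simp
  | succ k ih =>
      rw [pow_succ, ← mul_assoc, ih, mul_assoc, u1b, pow_succ, mul_assoc]

theorem comm_ab : Commute (aa cs F) (bb cs F) := by
  unfold Commute SemiconjBy
  rw [ab_one, ba_one]

theorem apow_bpow (k : ℕ) : aa cs F ^ k * bb cs F ^ k = 1 := by
  rw [← (comm_ab cs F).mul_pow, ab_one, one_pow]

theorem bpow_apow (k : ℕ) : bb cs F ^ k * aa cs F ^ k = 1 := by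
  rw [← ((comm_ab cs F).symm).mul_pow, ba_one, one_pow]

theorem bpow_eq (hn : 4 ≤ n) {k : ℕ} (hk : k ≤ n) : bb cs F ^ k = aa cs F ^ (n - k) := by
  have h1 : aa cs F ^ (n - k) * aa cs F ^ k = 1 := by
    rw [← pow_add, Nat.sub_add_cancel hk, aa_pow cs F hn]
  calc bb cs F ^ k = aa cs F ^ (n-k) * aa cs F ^ k * bb cs F ^ k := by rw [h1, one_mul]
    _ = aa cs F ^ (n-k) * (aa cs F ^ k * bb cs F ^ k) := by rw [mul_assoc]
    _ = aa cs F ^ (n-k) := by rw [apow_bpow, mul_one]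


theorem Ta (hn : 4 ≤ n) : RA cs F n * aa cs F = RA cs F n := by
  have h1 := geom_sum_mul (aa cs F) n
  rw [aa_pow cs F hn, sub_self] at h1
  rw [mul_sub, mul_one, sub_eq_zero] at h1
  rw [RA, h1]

theorem aT (hn : 4 ≤ n) : aa cs F * RA cs F n = RA cs F n := by
  have h1 := mul_geom_sum (aa cs F) n
  rw [aa_pow cs F hn, sub_self] at h1
  rw [sub_mul, one_mul, sub_eq_zero] at h1
  rw [RA, h1]

theorem Tb (hn : 4 ≤ n) : RA cs F n * bb cs F = RA cs F n := by
  conv_lhs => rw [← Ta cs F hn]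
  rw [mul_assoc, ab_one, mul_one]

theorem Ta_pow (hn : 4 ≤ n) (k : ℕ) : RA cs F n * aa cs F ^ k = RA cs F n := by
  induction k with
  | zero => simp
  | succ k ih => rw [pow_succ, ← mul_assoc, ih, Ta cs F hn]

theorem Tb_pow (hn : 4 ≤ n) (k : ℕ) : RA cs F n * bb cs F ^ k = RA cs F n := by
  induction k with
  | zero => simp
  | succ k ih => rw [pow_succ, ← mul_assoc, ih, Tb cs F hn]

theorem aT_pow (hn : 4 ≤ n) (k : ℕ) : aa cs F ^ k * RA cs F n = RA cs F n := by
  induction k with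
  | zero => simp
  | succ k ih => rw [pow_succ, mul_assoc, aT cs F hn, ih]

theorem TR (hn : 4 ≤ n) (m : ℕ) : RA cs F n * RA cs F m = m • RA cs F n := by
  rw [show RA cs F m = ∑ k ∈ Finset.range m, aa cs F ^ k from rfl, Finset.mul_sum]
  rw [Finset.sum_congr rfl (fun k _ => Ta_pow cs F hn k)]
  rw [Finset.sum_const, Finset.card_range]

theorem RBn_eq (hn : 4 ≤ n) : RB cs F n = RA cs F n := by
  rw [RB]
  rw [Finset.sum_congr rfl (fun k hk => bpow_eq cs F hn (le_of_lt (Finset.mem_range.mp hk)))]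
  have hre := Finset.sum_range_reflect (fun k => aa cs F ^ (k+1)) n
  calc ∑ k ∈ Finset.range n, aa cs F ^ (n - k)
      = ∑ k ∈ Finset.range n, aa cs F ^ (n - 1 - k + 1) := by
        refine Finset.sum_congr rfl fun k hk => ?_
        rw [Finset.mem_range] at hk
        congr 1
        omega
    _ = ∑ k ∈ Finset.range n, aa cs F ^ (k + 1) := hre
    _ = (∑ k ∈ Finset.range n, aa cs F ^ k) * aa cs F := by
        rw [Finset.sum_mul]
        exact Finset.sum_congr rfl fun k _ => by rw [pow_succ]
    _ = RA cs F n := Ta cs F hn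

theorem u0T (hn : 4 ≤ n) : u0 cs F * RA cs F n = RA cs F n * u0 cs F := by
  rw [RA, Finset.mul_sum, Finset.sum_congr rfl (fun k _ => u0_apow cs F k), ← Finset.sum_mul]
  rw [show (∑ k ∈ Finset.range n, bb cs F ^ k) = RB cs F n from rfl, RBn_eq cs F hn, RA]

theorem u1T (hn : 4 ≤ n) : u1 cs F * RA cs F n = RA cs F n * u1 cs F := by
  rw [RA, Finset.mul_sum, Finset.sum_congr rfl (fun k _ => u1_apow cs F k), ← Finset.sum_mul]
  rw [show (∑ k ∈ Finset.range n, bb cs F ^ k) = RB cs F n from rfl, RBn_eq cs F hn, RA]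

theorem Tu1_eq_Tu0 (hn : 4 ≤ n) : RA cs F n * u1 cs F = RA cs F n * u0 cs F := by
  rw [u1_eq cs F, ← mul_assoc, ← u0T cs F hn, mul_assoc, Ta cs F hn]

theorem split_T (hn : 4 ≤ n) {h : ℕ} (hh : n = h + h) :
    RA cs F n = RA cs F h + aa cs F ^ h * RA cs F h := by
  rw [congrArg (RA cs F) hh,
    show RA cs F (h+h) = ∑ k ∈ Finset.range (h+h), aa cs F ^ k from rfl,
    Finset.sum_range_add]
  congr 1
  rw [RA, Finset.mul_sum]
  exact Finset.sum_congr rfl fun k _ => by rw [pow_add]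

theorem geoR (h : ℕ) : (1 - aa cs F) * RA cs F h = 1 - aa cs F ^ h := by
  have h1 := mul_geom_sum (aa cs F) h
  have h2 : (1 - aa cs F) * RA cs F h = -((aa cs F - 1) * ∑ i ∈ Finset.range h, aa cs F ^ i) := by
    rw [RA]; noncomm_ring
  rw [h2, h1]
  noncomm_ring

theorem RB_eq (hn : 4 ≤ n) {h : ℕ} (hh : n = h + h) :
    RB cs F h = aa cs F ^ (h+1) * RA cs F h := by
  rw [RB]
  rw [Finset.sum_congr rfl (fun k hk => bpow_eq cs F hn
    (by rw [Finset.mem_range] at hk; omega))]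
  have hre := Finset.sum_range_reflect (fun k => aa cs F ^ (h+1+k)) h
  calc ∑ k ∈ Finset.range h, aa cs F ^ (n - k)
      = ∑ k ∈ Finset.range h, aa cs F ^ (h+1+(h - 1 - k)) := by
        refine Finset.sum_congr rfl fun k hk => ?_
        rw [Finset.mem_range] at hk
        congr 1
        omega
    _ = ∑ k ∈ Finset.range h, aa cs F ^ (h+1+k) := hre
    _ = aa cs F ^ (h+1) * RA cs F h := by
        rw [RA, Finset.mul_sum]
        exact Finset.sum_congr rfl fun k _ => by rw [pow_add]

theorem Ru1 (m : ℕ) : RA cs F m * u1 cs F = u1 cs F * RB cs F m := by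
  rw [RA, RB, Finset.sum_mul, Finset.mul_sum]
  exact Finset.sum_congr rfl fun k _ => (u1_bpow cs F k).symm

theorem Ru0 (m : ℕ) : RA cs F m * u0 cs F = u0 cs F * RB cs F m := by
  rw [RA, RB, Finset.sum_mul, Finset.mul_sum]
  exact Finset.sum_congr rfl fun k _ => (u0_bpow cs F k).symm

theorem RBu1 (m : ℕ) : RB cs F m * u1 cs F = u1 cs F * RA cs F m := by
  rw [RA, RB, Finset.sum_mul, Finset.mul_sum]
  exact Finset.sum_congr rfl fun k _ => (u1_apow cs F k).symm

theorem RBu0 (m : ℕ) : RB cs F m * u0 cs F = u0 cs F * RA cs F m := by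
  rw [RA, RB, Finset.sum_mul, Finset.mul_sum]
  exact Finset.sum_congr rfl fun k _ => (u0_apow cs F k).symm

theorem comm_aR (j m : ℕ) : aa cs F ^ j * RA cs F m = RA cs F m * aa cs F ^ j := by
  rw [RA, Finset.sum_mul, Finset.mul_sum]
  exact Finset.sum_congr rfl fun k _ => (pow_mul_comm _ _ _).symm


theorem sum_split {M : Type*} [AddCommMonoid M] (f : ℕ → M) :
    ∀ h : ℕ, ∑ m ∈ Finset.range (h+h), f m
      = ∑ k ∈ Finset.range h, f (2*k) + ∑ k ∈ Finset.range h, f (2*k+1)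
  | 0 => by simp
  | (h+1) => by
      have h1 : (h+1)+(h+1) = (h+h)+1+1 := by omega
      rw [h1, Finset.sum_range_succ, Finset.sum_range_succ, sum_split f h,
        Finset.sum_range_succ (fun k => f (2*k)), Finset.sum_range_succ (fun k => f (2*k+1))]
      have e1 : 2*h = h+h := by omega
      rw [e1]
      abel

theorem ofp_even (k : ℕ) : of (pw cs 0 1 (2*k)) = aa cs F ^ k := by
  rw [pw, cs.prod_alternatingWord_eq_mul_pow, if_pos (even_two_mul k), one_mul,
    Nat.mul_div_cancel_left k (by norm_num), map_pow, aa]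

theorem ofp_odd (k : ℕ) : of (pw cs 0 1 (2*k+1)) = u1 cs F * aa cs F ^ k := by
  rw [pw, cs.prod_alternatingWord_eq_mul_pow, if_neg (by simp [parity_simps]),
    show (2*k+1)/2 = k by omega, map_mul, map_pow, aa, u1]

theorem ofq_even (k : ℕ) : of (pw cs 1 0 (2*k)) = bb cs F ^ k := by
  rw [pw, cs.prod_alternatingWord_eq_mul_pow, if_pos (even_two_mul k), one_mul,
    Nat.mul_div_cancel_left k (by norm_num), map_pow, bb]

theorem ofq_odd (k : ℕ) : of (pw cs 1 0 (2*k+1)) = u0 cs F * bb cs F ^ k := by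
  rw [pw, cs.prod_alternatingWord_eq_mul_pow, if_neg (by simp [parity_simps]),
    show (2*k+1)/2 = k by omega, map_mul, map_pow, bb, u0]

theorem X1_eq (hn : 4 ≤ n) {h : ℕ} (hh : n = h + h) :
    descentElt F cs ({0} : Set (Fin 2)) = RA cs F h + u1 cs F * RA cs F h := by
  rw [x1_sum cs F hn]
  rw [show Finset.range n = Finset.range (h+h) from by rw [← hh]]
  rw [sum_split (fun m => of (pw cs 0 1 m)) h]
  congr 1
  · rw [RA]
    exact Finset.sum_congr rfl fun k _ => ofp_even cs F k
  · rw [RA, Finset.mul_sum]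
    exact Finset.sum_congr rfl fun k _ => ofp_odd cs F k

theorem X2_eq (hn : 4 ≤ n) {h : ℕ} (hh : n = h + h) :
    descentElt F cs ({1} : Set (Fin 2)) = RB cs F h + u0 cs F * RB cs F h := by
  rw [x2_sum cs F hn]
  rw [show Finset.range n = Finset.range (h+h) from by rw [← hh]]
  rw [sum_split (fun m => of (pw cs 1 0 m)) h]
  congr 1
  · rw [RB]
    exact Finset.sum_congr rfl fun k _ => ofq_even cs F k
  · rw [RB, Finset.mul_sum]
    exact Finset.sum_congr rfl fun k _ => ofq_odd cs F k

theorem x3_mul_of (v : W) : (∑ w : W, (of w : MonoidAlgebra F W)) * of v = ∑ w : W, of w := by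
  rw [Finset.sum_mul]
  exact Fintype.sum_bijective (· * v) (Group.mulRight_bijective v) _ _
    (fun x => by rw [map_mul])

theorem of_mul_x3 (v : W) : of v * (∑ w : W, (of w : MonoidAlgebra F W)) = ∑ w : W, of w := by
  rw [Finset.mul_sum]
  exact Fintype.sum_bijective (v * ·) (Group.mulLeft_bijective v) _ _
    (fun x => by rw [map_mul])

include cs in
theorem card_W (hn : 4 ≤ n) : Fintype.card W = 2 * n := by
  have h1 := card_ge cs hn
  have hAle : (FA cs).card ≤ n + 1 := le_trans (Finset.card_image_le) (by simp)
  have hBle : (FB cs).card ≤ n - 1 := le_trans (Finset.card_image_le) (by simp)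
  have h2 : (Finset.univ : Finset W).card ≤ (FA cs ∪ FB cs).card :=
    Finset.card_le_card (cover cs hn)
  have h3 := Finset.card_union_le (FA cs) (FB cs)
  rw [Finset.card_univ] at h2
  omega


theorem ahR (hn : 4 ≤ n) {h : ℕ} (hh : n = h + h) :
    aa cs F ^ h * RA cs F h = RA cs F n - RA cs F h := by
  rw [split_T cs F hn hh]; abel

theorem ah1R (hn : 4 ≤ n) {h : ℕ} (hh : n = h + h) :
    aa cs F ^ (h+1) * RA cs F h = RA cs F n - aa cs F * RA cs F h := by
  rw [pow_succ', mul_assoc, ahR cs F hn hh, mul_sub, aT cs F hn]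

theorem RB_eq' (hn : 4 ≤ n) {h : ℕ} (hh : n = h + h) :
    RB cs F h = RA cs F n - aa cs F * RA cs F h := by
  rw [RB_eq cs F hn hh, ah1R cs F hn hh]

theorem geoR' (h : ℕ) : RA cs F h - aa cs F * RA cs F h = 1 - aa cs F ^ h := by
  have l4 := geoR cs F h
  rw [sub_mul, one_mul] at l4
  exact l4

theorem X3_eq (hn : 4 ≤ n) {h : ℕ} (hh : n = h + h) :
    descentElt F cs (∅ : Set (Fin 2)) = RA cs F n + RA cs F n * u0 cs F := by
  have huniv : FA cs ∪ FB cs = Finset.univ :=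
    Finset.Subset.antisymm (Finset.subset_univ _) (cover cs hn)
  have hsA : ∑ w ∈ FA cs, (of w : MonoidAlgebra F W)
      = ∑ m ∈ Finset.range (n+1), of (pw cs 0 1 m) := by
    refine Finset.sum_image ?_
    intro x hx y hy hxy
    simp only [Finset.mem_coe, Finset.mem_range] at hx hy
    have hxy2 := congrArg cs.length hxy
    rwa [length_pw cs hn x (by omega), length_pw cs hn y (by omega)] at hxy2
  have hsB : ∑ w ∈ FB cs, (of w : MonoidAlgebra F W)
      = ∑ m ∈ Finset.Ico 1 n, of (pw cs 1 0 m) := by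
    refine Finset.sum_image ?_
    intro x hx y hy hxy
    simp only [Finset.mem_coe, Finset.mem_Ico] at hx hy
    have hxy2 := congrArg cs.length hxy
    rwa [length_qw cs hn x (by omega), length_qw cs hn y (by omega)] at hxy2
  have hq0 : ∑ m ∈ Finset.range n, (of (pw cs 1 0 m) : MonoidAlgebra F W)
      = 1 + ∑ m ∈ Finset.Ico 1 n, of (pw cs 1 0 m) := by
    rw [Finset.range_eq_Ico, Finset.sum_eq_sum_Ico_succ_bot (by omega : 0 < n)]
    rw [pw_zero cs 1 0, map_one]
  have hx1form : ∑ m ∈ Finset.range n, (of (pw cs 0 1 m) : MonoidAlgebra F W)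
      = RA cs F h + u1 cs F * RA cs F h := by
    rw [← x1_sum cs F hn, X1_eq cs F hn hh]
  have hx2form : ∑ m ∈ Finset.range n, (of (pw cs 1 0 m) : MonoidAlgebra F W)
      = RB cs F h + u0 cs F * RB cs F h := by
    rw [← x2_sum cs F hn, X2_eq cs F hn hh]
  have hofpn : (of (pw cs 0 1 n) : MonoidAlgebra F W) = aa cs F ^ h := by
    rw [congrArg (pw cs 0 1) (show n = 2*h by omega), ofp_even cs F h]
  have main : descentElt F cs (∅ : Set (Fin 2))
      = (RA cs F h + u1 cs F * RA cs F h) + aa cs F ^ h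
        + ((RB cs F h + u0 cs F * RB cs F h) - 1) := by
    rw [x3_sum cs F]
    calc (∑ w : W, (of w : MonoidAlgebra F W))
        = ∑ w ∈ FA cs ∪ FB cs, (of w : MonoidAlgebra F W) := by rw [huniv]
      _ = ∑ w ∈ FA cs, (of w : MonoidAlgebra F W) + ∑ w ∈ FB cs, of w :=
          Finset.sum_union (cards cs hn).2.2
      _ = (∑ m ∈ Finset.range (n+1), (of (pw cs 0 1 m) : MonoidAlgebra F W))
          + ∑ m ∈ Finset.Ico 1 n, of (pw cs 1 0 m) := by rw [hsA, hsB]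
      _ = ((∑ m ∈ Finset.range n, (of (pw cs 0 1 m) : MonoidAlgebra F W)) + of (pw cs 0 1 n))
          + ((∑ m ∈ Finset.range n, (of (pw cs 1 0 m) : MonoidAlgebra F W)) - 1) := by
          rw [Finset.sum_range_succ, hq0]
          abel
      _ = _ := by rw [hx1form, hx2form, hofpn]
  rw [main]
  have hrot : RA cs F h + RB cs F h + aa cs F ^ h - 1 = RA cs F n := by
    rw [RB_eq' cs F hn hh]
    calc RA cs F h + (RA cs F n - aa cs F * RA cs F h) + aa cs F ^ h - 1
        = RA cs F n + (RA cs F h - aa cs F * RA cs F h) + aa cs F ^ h - 1 := by abel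
      _ = RA cs F n + (1 - aa cs F ^ h) + aa cs F ^ h - 1 := by rw [geoR' cs F h]
      _ = RA cs F n := by abel
  have hrefl : u1 cs F * RA cs F h + u0 cs F * RB cs F h = RA cs F n * u0 cs F := by
    rw [u1_eq cs F, RB_eq' cs F hn hh, mul_assoc, ← mul_add]
    rw [show aa cs F * RA cs F h + (RA cs F n - aa cs F * RA cs F h) = RA cs F n from by abel]
    exact u0T cs F hn
  calc (RA cs F h + u1 cs F * RA cs F h) + aa cs F ^ h
        + ((RB cs F h + u0 cs F * RB cs F h) - 1)
      = (RA cs F h + RB cs F h + aa cs F ^ h - 1)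
        + (u1 cs F * RA cs F h + u0 cs F * RB cs F h) := by abel
    _ = RA cs F n + RA cs F n * u0 cs F := by rw [hrot, hrefl]

theorem key_C (hn : 4 ≤ n) {h : ℕ} (hh : n = h + h) :
    (RA cs F h + RB cs F h) * RA cs F h
      = h • RA cs F n + (2 • RA cs F h - RA cs F n) := by
  rw [add_mul, RB_eq' cs F hn hh, sub_mul, TR cs F hn h]
  have e1 : aa cs F * RA cs F h * RA cs F h = aa cs F * (RA cs F h * RA cs F h) := by
    rw [mul_assoc]
  rw [e1]
  have e2 : RA cs F h * RA cs F h - aa cs F * (RA cs F h * RA cs F h)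
      = 2 • RA cs F h - RA cs F n := by
    calc RA cs F h * RA cs F h - aa cs F * (RA cs F h * RA cs F h)
        = (1 - aa cs F) * (RA cs F h * RA cs F h) := by rw [sub_mul, one_mul]
      _ = ((1 - aa cs F) * RA cs F h) * RA cs F h := by rw [mul_assoc]
      _ = (1 - aa cs F ^ h) * RA cs F h := by rw [geoR cs F h]
      _ = RA cs F h - aa cs F ^ h * RA cs F h := by rw [sub_mul, one_mul]
      _ = RA cs F h - (RA cs F n - RA cs F h) := by rw [ahR cs F hn hh]
      _ = 2 • RA cs F h - RA cs F n := by rw [two_smul]; abel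
  calc RA cs F h * RA cs F h + (h • RA cs F n - aa cs F * (RA cs F h * RA cs F h))
      = h • RA cs F n + (RA cs F h * RA cs F h - aa cs F * (RA cs F h * RA cs F h)) := by abel
    _ = h • RA cs F n + (2 • RA cs F h - RA cs F n) := by rw [e2]

theorem hu1T (hn : 4 ≤ n) : u1 cs F * RA cs F n = RA cs F n * u0 cs F := by
  rw [u1T cs F hn, Tu1_eq_Tu0 cs F hn]

theorem prod_x1x1 (hn : 4 ≤ n) {h : ℕ} (hh : n = h + h) :
    (RA cs F h + u1 cs F * RA cs F h) * (RA cs F h + u1 cs F * RA cs F h)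
      = 2 • (RA cs F h + u1 cs F * RA cs F h)
        + h • (RA cs F n + RA cs F n * u0 cs F) - (RA cs F n + RA cs F n * u0 cs F) := by
  have t2 : RA cs F h * (u1 cs F * RA cs F h) = u1 cs F * (RB cs F h * RA cs F h) := by
    rw [← mul_assoc, Ru1 cs F h, mul_assoc]
  have t4 : (u1 cs F * RA cs F h) * (u1 cs F * RA cs F h) = RB cs F h * RA cs F h := by
    calc (u1 cs F * RA cs F h) * (u1 cs F * RA cs F h)
        = u1 cs F * ((RA cs F h * u1 cs F) * RA cs F h) := by
          rw [mul_assoc, mul_assoc]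
      _ = u1 cs F * ((u1 cs F * RB cs F h) * RA cs F h) := by rw [Ru1 cs F h]
      _ = (u1 cs F * u1 cs F) * (RB cs F h * RA cs F h) := by
          rw [mul_assoc, mul_assoc]
      _ = RB cs F h * RA cs F h := by rw [u1_sq cs F, one_mul]
  have hC : RA cs F h * RA cs F h + RB cs F h * RA cs F h
      = h • RA cs F n + (2 • RA cs F h - RA cs F n) := by
    rw [← add_mul, key_C cs F hn hh]
  calc (RA cs F h + u1 cs F * RA cs F h) * (RA cs F h + u1 cs F * RA cs F h)
      = RA cs F h * RA cs F h + RA cs F h * (u1 cs F * RA cs F h)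
        + ((u1 cs F * RA cs F h) * RA cs F h + (u1 cs F * RA cs F h) * (u1 cs F * RA cs F h)) := by
        rw [add_mul, mul_add, mul_add]
    _ = (RA cs F h * RA cs F h + RB cs F h * RA cs F h)
        + u1 cs F * (RA cs F h * RA cs F h + RB cs F h * RA cs F h) := by
        rw [t2, t4, mul_assoc, mul_add]
        abel
    _ = (h • RA cs F n + (2 • RA cs F h - RA cs F n))
        + u1 cs F * (h • RA cs F n + (2 • RA cs F h - RA cs F n)) := by rw [hC]
    _ = (h • RA cs F n + (2 • RA cs F h - RA cs F n))
        + (h • (u1 cs F * RA cs F n) + (2 • (u1 cs F * RA cs F h) - u1 cs F * RA cs F n)) := by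
        rw [mul_add, mul_sub, mul_smul_comm, mul_smul_comm]
    _ = (h • RA cs F n + (2 • RA cs F h - RA cs F n))
        + (h • (RA cs F n * u0 cs F) + (2 • (u1 cs F * RA cs F h) - RA cs F n * u0 cs F)) := by
        rw [hu1T cs F hn]
    _ = _ := by
        rw [smul_add, smul_add]
        abel

theorem key_rot (hn : 4 ≤ n) {h : ℕ} (hh : n = h + h) :
    aa cs F ^ (h+1) * (RA cs F h * RA cs F h) + aa cs F * (RA cs F h * RA cs F h)
      = h • RA cs F n := by
  calc aa cs F ^ (h+1) * (RA cs F h * RA cs F h) + aa cs F * (RA cs F h * RA cs F h)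
      = aa cs F * ((aa cs F ^ h * RA cs F h) * RA cs F h)
        + aa cs F * (RA cs F h * RA cs F h) := by
        rw [pow_succ', mul_assoc, mul_assoc]
    _ = aa cs F * (((RA cs F n - RA cs F h) * RA cs F h) + RA cs F h * RA cs F h) := by
        rw [ahR cs F hn hh, mul_add]
    _ = aa cs F * (RA cs F n * RA cs F h) := by rw [sub_mul]; rw [sub_add_cancel]
    _ = aa cs F * (h • RA cs F n) := by rw [TR cs F hn h]
    _ = h • (aa cs F * RA cs F n) := by rw [mul_smul_comm]
    _ = h • RA cs F n := by rw [aT cs F hn]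

theorem RB_sq (hn : 4 ≤ n) {h : ℕ} (hh : n = h + h) :
    RB cs F h * RB cs F h = aa cs F * (aa cs F * (RA cs F h * RA cs F h)) := by
  rw [RB_eq cs F hn hh]
  calc (aa cs F ^ (h+1) * RA cs F h) * (aa cs F ^ (h+1) * RA cs F h)
      = aa cs F ^ (h+1) * ((RA cs F h * aa cs F ^ (h+1)) * RA cs F h) := by
        rw [mul_assoc, mul_assoc]
    _ = aa cs F ^ (h+1) * ((aa cs F ^ (h+1) * RA cs F h) * RA cs F h) := by
        rw [← comm_aR cs F (h+1) h]
    _ = (aa cs F ^ (h+1) * aa cs F ^ (h+1)) * (RA cs F h * RA cs F h) := by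
        rw [mul_assoc, mul_assoc]
    _ = aa cs F * (aa cs F * (RA cs F h * RA cs F h)) := by
        have hpow : aa cs F ^ (h+1) * aa cs F ^ (h+1) = aa cs F * aa cs F := by
          rw [← pow_add, show (h+1)+(h+1) = n + 2 by omega, pow_add, aa_pow cs F hn, one_mul,
            pow_two]
        rw [hpow, mul_assoc]

theorem R_RB (hn : 4 ≤ n) {h : ℕ} (hh : n = h + h) :
    RA cs F h * RB cs F h = aa cs F ^ (h+1) * (RA cs F h * RA cs F h) := by
  rw [RB_eq cs F hn hh, ← mul_assoc, ← comm_aR cs F (h+1) h, mul_assoc]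


theorem prod_x1x2 (hn : 4 ≤ n) {h : ℕ} (hh : n = h + h) :
    (RA cs F h + u1 cs F * RA cs F h) * (RB cs F h + u0 cs F * RB cs F h)
      = h • (RA cs F n + RA cs F n * u0 cs F) := by
  have hA1 : RA cs F h * (u0 cs F * RB cs F h) = u0 cs F * (RB cs F h * RB cs F h) := by
    rw [← mul_assoc, Ru0 cs F h, mul_assoc]
  have hA2 : (u1 cs F * RA cs F h) * (u0 cs F * RB cs F h)
      = bb cs F * (RB cs F h * RB cs F h) := by
    calc (u1 cs F * RA cs F h) * (u0 cs F * RB cs F h)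
        = u1 cs F * ((RA cs F h * u0 cs F) * RB cs F h) := by rw [mul_assoc, mul_assoc]
      _ = u1 cs F * ((u0 cs F * RB cs F h) * RB cs F h) := by rw [Ru0 cs F h]
      _ = (u1 cs F * u0 cs F) * (RB cs F h * RB cs F h) := by rw [mul_assoc, mul_assoc]
      _ = bb cs F * (RB cs F h * RB cs F h) := by rw [u1u0 cs F]
  have hA3 : (u1 cs F * RA cs F h) * RB cs F h = u1 cs F * (RA cs F h * RB cs F h) :=
    mul_assoc _ _ _
  have hrot : RA cs F h * RB cs F h + bb cs F * (RB cs F h * RB cs F h)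
      = h • RA cs F n := by
    have hb : bb cs F * (aa cs F * (aa cs F * (RA cs F h * RA cs F h)))
        = aa cs F * (RA cs F h * RA cs F h) := by
      rw [← mul_assoc, ba_one cs F, one_mul]
    rw [R_RB cs F hn hh, RB_sq cs F hn hh, hb]
    exact key_rot cs F hn hh
  have hrefl : u1 cs F * (RA cs F h * RB cs F h) + u0 cs F * (RB cs F h * RB cs F h)
      = h • (RA cs F n * u0 cs F) := by
    rw [R_RB cs F hn hh, RB_sq cs F hn hh, u1_eq cs F, mul_assoc, ← mul_add]
    rw [show aa cs F * (aa cs F ^ (h+1) * (RA cs F h * RA cs F h))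
          + aa cs F * (aa cs F * (RA cs F h * RA cs F h))
        = aa cs F * (aa cs F ^ (h+1) * (RA cs F h * RA cs F h)
          + aa cs F * (RA cs F h * RA cs F h)) from (mul_add _ _ _).symm]
    rw [key_rot cs F hn hh, mul_smul_comm, mul_smul_comm, aT cs F hn, u0T cs F hn]
  calc (RA cs F h + u1 cs F * RA cs F h) * (RB cs F h + u0 cs F * RB cs F h)
      = (RA cs F h * RB cs F h + bb cs F * (RB cs F h * RB cs F h))
        + (u1 cs F * (RA cs F h * RB cs F h) + u0 cs F * (RB cs F h * RB cs F h)) := by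
        rw [add_mul, mul_add, mul_add, hA1, hA2, hA3]
        abel
    _ = h • RA cs F n + h • (RA cs F n * u0 cs F) := by rw [hrot, hrefl]
    _ = _ := by rw [smul_add]

theorem RB_R (hn : 4 ≤ n) {h : ℕ} (hh : n = h + h) :
    RB cs F h * RA cs F h = aa cs F ^ (h+1) * (RA cs F h * RA cs F h) := by
  rw [RB_eq cs F hn hh, mul_assoc]

theorem prod_x2x1 (hn : 4 ≤ n) {h : ℕ} (hh : n = h + h) :
    (RB cs F h + u0 cs F * RB cs F h) * (RA cs F h + u1 cs F * RA cs F h)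
      = h • (RA cs F n + RA cs F n * u0 cs F) := by
  have hB1 : RB cs F h * (u1 cs F * RA cs F h) = u1 cs F * (RA cs F h * RA cs F h) := by
    rw [← mul_assoc, RBu1 cs F h, mul_assoc]
  have hB2 : (u0 cs F * RB cs F h) * RA cs F h = u0 cs F * (RB cs F h * RA cs F h) :=
    mul_assoc _ _ _
  have hB3 : (u0 cs F * RB cs F h) * (u1 cs F * RA cs F h)
      = aa cs F * (RA cs F h * RA cs F h) := by
    calc (u0 cs F * RB cs F h) * (u1 cs F * RA cs F h)
        = u0 cs F * ((RB cs F h * u1 cs F) * RA cs F h) := by rw [mul_assoc, mul_assoc]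
      _ = u0 cs F * ((u1 cs F * RA cs F h) * RA cs F h) := by rw [RBu1 cs F h]
      _ = (u0 cs F * u1 cs F) * (RA cs F h * RA cs F h) := by rw [mul_assoc, mul_assoc]
      _ = aa cs F * (RA cs F h * RA cs F h) := by rw [u0u1 cs F]
  have hrot : RB cs F h * RA cs F h + aa cs F * (RA cs F h * RA cs F h)
      = h • RA cs F n := by
    rw [RB_R cs F hn hh]
    exact key_rot cs F hn hh
  have hrefl : u1 cs F * (RA cs F h * RA cs F h) + u0 cs F * (RB cs F h * RA cs F h)
      = h • (RA cs F n * u0 cs F) := by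
    rw [RB_R cs F hn hh, u1_eq cs F, mul_assoc, ← mul_add]
    rw [show aa cs F * (RA cs F h * RA cs F h)
          + aa cs F ^ (h+1) * (RA cs F h * RA cs F h)
        = aa cs F ^ (h+1) * (RA cs F h * RA cs F h)
          + aa cs F * (RA cs F h * RA cs F h) from add_comm _ _]
    rw [key_rot cs F hn hh, mul_smul_comm, u0T cs F hn]
  calc (RB cs F h + u0 cs F * RB cs F h) * (RA cs F h + u1 cs F * RA cs F h)
      = (RB cs F h * RA cs F h + aa cs F * (RA cs F h * RA cs F h))
        + (u1 cs F * (RA cs F h * RA cs F h) + u0 cs F * (RB cs F h * RA cs F h)) := by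
        rw [add_mul, mul_add, mul_add, hB1, hB2, hB3]
        abel
    _ = h • RA cs F n + h • (RA cs F n * u0 cs F) := by rw [hrot, hrefl]
    _ = _ := by rw [smul_add]

theorem comm_RB (hn : 4 ≤ n) {h : ℕ} (hh : n = h + h) (j : ℕ) :
    RB cs F h * aa cs F ^ j = aa cs F ^ j * RB cs F h := by
  rw [RB_eq cs F hn hh, mul_assoc, ← comm_aR cs F j h, ← mul_assoc, pow_mul_comm, mul_assoc]

theorem key_C' (hn : 4 ≤ n) {h : ℕ} (hh : n = h + h) :
    RB cs F h * RB cs F h + RA cs F h * RB cs F h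
      = h • RA cs F n + (2 • RB cs F h - RA cs F n) := by
  have step1 : RB cs F h * RB cs F h + RA cs F h * RB cs F h
      = aa cs F ^ (h+1) * ((RA cs F h + RB cs F h) * RA cs F h) := by
    calc RB cs F h * RB cs F h + RA cs F h * RB cs F h
        = (RB cs F h + RA cs F h) * RB cs F h := (add_mul _ _ _).symm
      _ = (RB cs F h + RA cs F h) * (aa cs F ^ (h+1) * RA cs F h) := by
          rw [← RB_eq cs F hn hh]
      _ = ((RB cs F h + RA cs F h) * aa cs F ^ (h+1)) * RA cs F h := (mul_assoc _ _ _).symm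
      _ = (aa cs F ^ (h+1) * (RB cs F h + RA cs F h)) * RA cs F h := by
          rw [add_mul, mul_add, comm_RB cs F hn hh (h+1), comm_aR cs F (h+1) h]
      _ = aa cs F ^ (h+1) * ((RB cs F h + RA cs F h) * RA cs F h) := mul_assoc _ _ _
      _ = aa cs F ^ (h+1) * ((RA cs F h + RB cs F h) * RA cs F h) := by rw [add_comm (RB cs F h)]
  rw [step1, key_C cs F hn hh, mul_add, mul_smul_comm, aT_pow cs F hn (h+1), mul_sub,
    mul_smul_comm, ← RB_eq cs F hn hh, aT_pow cs F hn (h+1)]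

theorem prod_x2x2 (hn : 4 ≤ n) {h : ℕ} (hh : n = h + h) :
    (RB cs F h + u0 cs F * RB cs F h) * (RB cs F h + u0 cs F * RB cs F h)
      = 2 • (RB cs F h + u0 cs F * RB cs F h)
        + h • (RA cs F n + RA cs F n * u0 cs F) - (RA cs F n + RA cs F n * u0 cs F) := by
  have hC1 : RB cs F h * (u0 cs F * RB cs F h) = u0 cs F * (RA cs F h * RB cs F h) := by
    rw [← mul_assoc, RBu0 cs F h, mul_assoc]
  have hC2 : (u0 cs F * RB cs F h) * (u0 cs F * RB cs F h) = RA cs F h * RB cs F h := by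
    calc (u0 cs F * RB cs F h) * (u0 cs F * RB cs F h)
        = u0 cs F * ((RB cs F h * u0 cs F) * RB cs F h) := by rw [mul_assoc, mul_assoc]
      _ = u0 cs F * ((u0 cs F * RA cs F h) * RB cs F h) := by rw [RBu0 cs F h]
      _ = (u0 cs F * u0 cs F) * (RA cs F h * RB cs F h) := by rw [mul_assoc, mul_assoc]
      _ = RA cs F h * RB cs F h := by rw [u0_sq cs F, one_mul]
  have hC3 : (u0 cs F * RB cs F h) * RB cs F h = u0 cs F * (RB cs F h * RB cs F h) :=
    mul_assoc _ _ _
  have hu0T : u0 cs F * RA cs F n = RA cs F n * u0 cs F := u0T cs F hn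
  calc (RB cs F h + u0 cs F * RB cs F h) * (RB cs F h + u0 cs F * RB cs F h)
      = (RB cs F h * RB cs F h + RA cs F h * RB cs F h)
        + u0 cs F * (RB cs F h * RB cs F h + RA cs F h * RB cs F h) := by
        rw [add_mul, mul_add, mul_add, hC1, hC2, hC3, mul_add]
        abel
    _ = (h • RA cs F n + (2 • RB cs F h - RA cs F n))
        + u0 cs F * (h • RA cs F n + (2 • RB cs F h - RA cs F n)) := by
        rw [key_C' cs F hn hh]
    _ = (h • RA cs F n + (2 • RB cs F h - RA cs F n))
        + (h • (RA cs F n * u0 cs F) + (2 • (u0 cs F * RB cs F h) - RA cs F n * u0 cs F)) := by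
        rw [mul_add, mul_sub, mul_smul_comm, mul_smul_comm, hu0T]
    _ = _ := by
        rw [smul_add, smul_add]
        abel

end Alg

end Stmt6Aux

open Stmt6Aux in
/-- If `n` is even, `char F ≠ 2` and `char F ∣ n`, the elements
`e_U = 2⁻¹x₁ − 4⁻¹x₃`, `e_V = 2⁻¹x₂ − 4⁻¹x₃`, `e_Z = 1 − e_U − e_V` of the group algebra of
the dihedral Coxeter group of type `I₂(n)` form a set of orthogonal idempotents with
`e_Z x₃ e_Z = x₃`. -/
theorem stmt_6 (F : Type*) [Field F] (n : ℕ) (hn : 4 ≤ n)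
    (W : Type*) [Group W] [Fintype W]
    (cs : CoxeterSystem (CoxeterMatrix.I (n - 2)) W)
    (hneven : Even n) (hchar : ringChar F ≠ 2) (hnF : (n : F) = 0)
    (x₁ x₂ x₃ eU eV eZ : MonoidAlgebra F W)
    (hx₁ : x₁ = descentElt F cs ({0} : Set (Fin 2)))
    (hx₂ : x₂ = descentElt F cs ({1} : Set (Fin 2)))
    (hx₃ : x₃ = descentElt F cs (∅ : Set (Fin 2)))
    (heU : eU = (2 : F)⁻¹ • x₁ - (4 : F)⁻¹ • x₃)
    (heV : eV = (2 : F)⁻¹ • x₂ - (4 : F)⁻¹ • x₃)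
    (heZ : eZ = 1 - eU - eV) :
    eU * eU = eU ∧ eV * eV = eV ∧
    eU * eV = 0 ∧ eV * eU = 0 ∧
    eU * eZ = 0 ∧ eZ * eU = 0 ∧
    eV * eZ = 0 ∧ eZ * eV = 0 ∧
    eZ * x₃ * eZ = x₃ := by
  classical
  obtain ⟨h, hh⟩ := hneven
  have h2 : (2:F) ≠ 0 := by
    intro h20
    rcases (Nat.Prime.eq_one_or_self_of_dvd Nat.prime_two _
      ((ringChar.spec F 2).mp (by exact_mod_cast h20))) with h1 | h1
    · have : ((1:ℕ):F) = 0 := (ringChar.spec F 1).mpr (h1 ▸ dvd_refl _)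
      rw [Nat.cast_one] at this
      exact one_ne_zero this
    · exact hchar h1
  have hhF : (h:F) = 0 := by
    have hmul : (2:F) * (h:F) = 0 := by
      rw [hh] at hnF
      push_cast at hnF
      rw [two_mul]
      exact hnF
    rcases mul_eq_zero.mp hmul with hc | hc
    · exact absurd hc h2
    · exact hc
  have hkill : ∀ v : MonoidAlgebra F W, h • v = 0 := fun v => by
    rw [← Nat.cast_smul_eq_nsmul F, hhF, zero_smul]
  have hnkill : ∀ v : MonoidAlgebra F W, n • v = 0 := fun v => by
    rw [← Nat.cast_smul_eq_nsmul F, hnF, zero_smul]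
  have h2s : ∀ v : MonoidAlgebra F W, (2:F) • v = 2 • v := fun v => by
    rw [← Nat.cast_smul_eq_nsmul F]
    norm_num
  have hx1R : x₁ = RA cs F h + u1 cs F * RA cs F h := by
    rw [hx₁, X1_eq cs F hn hh]
  have hx2R : x₂ = RB cs F h + u0 cs F * RB cs F h := by
    rw [hx₂, X2_eq cs F hn hh]
  have hx3R : x₃ = RA cs F n + RA cs F n * u0 cs F := by
    rw [hx₃, X3_eq cs F hn hh]
  have hx1S : x₁ = ∑ m ∈ Finset.range n, MonoidAlgebra.of F W (pw cs 0 1 m) := by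
    rw [hx₁, x1_sum cs F hn]
  have hx2S : x₂ = ∑ m ∈ Finset.range n, MonoidAlgebra.of F W (pw cs 1 0 m) := by
    rw [hx₂, x2_sum cs F hn]
  have hx3S : x₃ = ∑ w : W, MonoidAlgebra.of F W w := by
    rw [hx₃, x3_sum cs F]
  have hx11 : x₁ * x₁ = (2:F) • x₁ - x₃ := by
    rw [h2s, hx1R, hx3R, prod_x1x1 cs F hn hh, hkill, add_zero]
  have hx22 : x₂ * x₂ = (2:F) • x₂ - x₃ := by
    rw [h2s, hx2R, hx3R, prod_x2x2 cs F hn hh, hkill, add_zero]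
  have hx12 : x₁ * x₂ = 0 := by
    rw [hx1R, hx2R, prod_x1x2 cs F hn hh, hkill]
  have hx21 : x₂ * x₁ = 0 := by
    rw [hx1R, hx2R, prod_x2x1 cs F hn hh, hkill]
  have hx31 : x₃ * x₁ = 0 := by
    calc x₃ * x₁ = ∑ m ∈ Finset.range n,
          (∑ w : W, MonoidAlgebra.of F W w) * MonoidAlgebra.of F W (pw cs 0 1 m) := by
          rw [hx3S, hx1S, Finset.mul_sum]
      _ = ∑ _m ∈ Finset.range n, ∑ w : W, MonoidAlgebra.of F W w :=
          Finset.sum_congr rfl fun m _ => x3_mul_of (W := W) F _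
      _ = n • ∑ w : W, MonoidAlgebra.of F W w := by
          rw [Finset.sum_const, Finset.card_range]
      _ = 0 := hnkill _
  have hx13 : x₁ * x₃ = 0 := by
    calc x₁ * x₃ = ∑ m ∈ Finset.range n,
          MonoidAlgebra.of F W (pw cs 0 1 m) * ∑ w : W, MonoidAlgebra.of F W w := by
          rw [hx3S, hx1S, Finset.sum_mul]
      _ = ∑ _m ∈ Finset.range n, ∑ w : W, MonoidAlgebra.of F W w :=
          Finset.sum_congr rfl fun m _ => of_mul_x3 (W := W) F _
      _ = n • ∑ w : W, MonoidAlgebra.of F W w := by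
          rw [Finset.sum_const, Finset.card_range]
      _ = 0 := hnkill _
  have hx32 : x₃ * x₂ = 0 := by
    calc x₃ * x₂ = ∑ m ∈ Finset.range n,
          (∑ w : W, MonoidAlgebra.of F W w) * MonoidAlgebra.of F W (pw cs 1 0 m) := by
          rw [hx3S, hx2S, Finset.mul_sum]
      _ = ∑ _m ∈ Finset.range n, ∑ w : W, MonoidAlgebra.of F W w :=
          Finset.sum_congr rfl fun m _ => x3_mul_of (W := W) F _
      _ = n • ∑ w : W, MonoidAlgebra.of F W w := by
          rw [Finset.sum_const, Finset.card_range]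
      _ = 0 := hnkill _
  have hx23 : x₂ * x₃ = 0 := by
    calc x₂ * x₃ = ∑ m ∈ Finset.range n,
          MonoidAlgebra.of F W (pw cs 1 0 m) * ∑ w : W, MonoidAlgebra.of F W w := by
          rw [hx3S, hx2S, Finset.sum_mul]
      _ = ∑ _m ∈ Finset.range n, ∑ w : W, MonoidAlgebra.of F W w :=
          Finset.sum_congr rfl fun m _ => of_mul_x3 (W := W) F _
      _ = n • ∑ w : W, MonoidAlgebra.of F W w := by
          rw [Finset.sum_const, Finset.card_range]
      _ = 0 := hnkill _
  have hx33 : x₃ * x₃ = 0 := by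
    calc x₃ * x₃ = ∑ w : W,
          (∑ v : W, MonoidAlgebra.of F W v) * MonoidAlgebra.of F W w := by
          rw [hx3S, Finset.mul_sum]
      _ = ∑ _w : W, ∑ v : W, MonoidAlgebra.of F W v :=
          Finset.sum_congr rfl fun w _ => x3_mul_of (W := W) F _
      _ = Fintype.card W • ∑ v : W, MonoidAlgebra.of F W v := by
          rw [Finset.sum_const, Finset.card_univ]
      _ = 0 := by
          rw [card_W cs hn, mul_smul]
          rw [hnkill]
          rw [smul_zero]
  have hd4 : (4:F)⁻¹ = (2:F)⁻¹ * (2:F)⁻¹ := by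
    rw [show (4:F) = 2*2 by norm_num, mul_inv]
  have heU' : eU = (2:F)⁻¹ • x₁ - ((2:F)⁻¹ * (2:F)⁻¹) • x₃ := by rw [heU, hd4]
  have heV' : eV = (2:F)⁻¹ • x₂ - ((2:F)⁻¹ * (2:F)⁻¹) • x₃ := by rw [heV, hd4]
  have heUU : eU * eU = eU := by
    rw [heU', sub_mul, mul_sub, mul_sub, smul_mul_smul_comm, smul_mul_smul_comm,
      smul_mul_smul_comm, smul_mul_smul_comm, hx11, hx13, hx31, hx33,
      smul_zero, smul_zero, smul_zero]
    rw [smul_sub, smul_smul]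
    have hc1 : (2:F)⁻¹ * (2:F)⁻¹ * 2 = (2:F)⁻¹ := by field_simp
    rw [hc1]
    abel
  have heVV : eV * eV = eV := by
    rw [heV', sub_mul, mul_sub, mul_sub, smul_mul_smul_comm, smul_mul_smul_comm,
      smul_mul_smul_comm, smul_mul_smul_comm, hx22, hx23, hx32, hx33,
      smul_zero, smul_zero, smul_zero]
    rw [smul_sub, smul_smul]
    have hc1 : (2:F)⁻¹ * (2:F)⁻¹ * 2 = (2:F)⁻¹ := by field_simp
    rw [hc1]
    abel
  have heUV : eU * eV = 0 := by
    rw [heU', heV', sub_mul, mul_sub, mul_sub, smul_mul_smul_comm, smul_mul_smul_comm,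
      smul_mul_smul_comm, smul_mul_smul_comm, hx12, hx13, hx32, hx33]
    simp
  have heVU : eV * eU = 0 := by
    rw [heU', heV', sub_mul, mul_sub, mul_sub, smul_mul_smul_comm, smul_mul_smul_comm,
      smul_mul_smul_comm, smul_mul_smul_comm, hx21, hx23, hx31, hx33]
    simp
  have heU3 : eU * x₃ = 0 := by
    rw [heU', sub_mul, smul_mul_assoc, smul_mul_assoc, hx13, hx33]
    simp
  have heV3 : eV * x₃ = 0 := by
    rw [heV', sub_mul, smul_mul_assoc, smul_mul_assoc, hx23, hx33]
    simp
  have h3eU : x₃ * eU = 0 := by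
    rw [heU', mul_sub, mul_smul_comm, mul_smul_comm, hx31, hx33]
    simp
  have h3eV : x₃ * eV = 0 := by
    rw [heV', mul_sub, mul_smul_comm, mul_smul_comm, hx32, hx33]
    simp
  have heUZ : eU * eZ = 0 := by
    rw [heZ, mul_sub, mul_sub, mul_one, heUU, heUV]
    simp
  have heZU : eZ * eU = 0 := by
    rw [heZ, sub_mul, sub_mul, one_mul, heUU, heVU]
    simp
  have heVZ : eV * eZ = 0 := by
    rw [heZ, mul_sub, mul_sub, mul_one, heVV, heVU]
    simp
  have heZV : eZ * eV = 0 := by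
    rw [heZ, sub_mul, sub_mul, one_mul, heVV, heUV]
    simp
  have hZ3 : eZ * x₃ = x₃ := by
    rw [heZ, sub_mul, sub_mul, one_mul, heU3, heV3]
    simp
  have h3Z : x₃ * eZ = x₃ := by
    rw [heZ, mul_sub, mul_sub, mul_one, h3eU, h3eV]
    simp
  exact ⟨heUU, heVV, heUV, heVU, heUZ, heZU, heVZ, heZV, by rw [hZ3, h3Z]⟩
end
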